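/- arXiv:2305.02771 — 3 statements merged into one kernel-verified Lean document; each statement's English description precedes it below -/
import Mathlib

section
/- Let (X, D) be a locally compact, complete metric space, α > 1, and Ω ⊆ X an open set with D_α(Ω) ≠ ∅. Let (d_n)_{n∈ℕ} ⊆ D_α(Ω) and d ∈ D_α(Ω). If d_n → d uniformly on compact subsets of Ω × Ω, then the length functionals L_{d̄_n} Γ-converge to L_{d̄} on Lip([0,1]; Ω̄) equipped with the topology of uniform convergence: (liminf) for every sequence of Lipschitz curves γⁿ : [0,1] → Ω̄ converging uniformly to a Lipschitz curve γ, one has L_{d̄}(γ) ≤ liminf_n L_{d̄_n}(γⁿ); (limsup) for every Lipschitz curve γ : [0,1] → Ω̄ there exist Lipschitz curves γⁿ converging uniformly to γ with limsup_n L_{d̄_n}(γⁿ) ≤ L_{d̄}(γ). -/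
open Filter MeasureTheory Set
open scoped ENNReal Topology

/-- Length of the curve `γ` on the interval `[a, b]`, with respect to the
(candidate) distance `d`, defined as a supremum over finite partitions. -/
noncomputable def pathLengthOn {E : Type*} (d : E → E → ℝ) (γ : ℝ → E) (a b : ℝ) : ℝ≥0∞ :=
  ⨆ (k : ℕ) (t : Fin (k + 1) → ℝ) (_ : Monotone t) (_ : t 0 = a) (_ : t (Fin.last k) = b),
    ∑ i : Fin k, ENNReal.ofReal (d (γ (t i.succ)) (γ (t i.castSucc)))

/-- Length of the curve `γ : [0,1] → E` with respect to `d`. -/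
noncomputable def pathLength {E : Type*} (d : E → E → ℝ) (γ : ℝ → E) : ℝ≥0∞ :=
  pathLengthOn d γ 0 1

/-- `d` is a distance on `E`. -/
def IsDistance {E : Type*} (d : E → E → ℝ) : Prop :=
  (∀ x y, d x y = d y x) ∧ (∀ x y z, d x z ≤ d x y + d y z) ∧ ∀ x y, d x y = 0 ↔ x = y

/-- `γ : [0,1] → E` is a Lipschitz curve with respect to `d`. -/
def LipCurve {E : Type*} (d : E → E → ℝ) (γ : ℝ → E) : Prop :=
  ∃ K : ℝ, ∀ s ∈ Icc (0 : ℝ) 1, ∀ t ∈ Icc (0 : ℝ) 1, d (γ s) (γ t) ≤ K * |s - t|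

/-- `(E, d)` is a length space: `d x y` is the infimum of lengths of Lipschitz
curves `γ : [0,1] → E` joining `x` to `y`. -/
def IsLengthDist {E : Type*} (d : E → E → ℝ) : Prop :=
  ∀ x y : E, ENNReal.ofReal (d x y) =
    ⨅ (γ : ℝ → E) (_ : LipCurve d γ) (_ : γ 0 = x) (_ : γ 1 = y), pathLength d γ

/-- `d ∈ 𝒟_α(Ω)` : `d` is a distance on `Ω` making it a length space and satisfying
`α⁻¹ D ≤ d ≤ α D`. -/
def MemD {X : Type*} [MetricSpace X] (α : ℝ) (Ω : Set X) (d : Ω → Ω → ℝ) : Prop :=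
  IsDistance d ∧ IsLengthDist d ∧
    ∀ x y : Ω, α⁻¹ * dist (x : X) (y : X) ≤ d x y ∧ d x y ≤ α * dist (x : X) (y : X)

/-- Uniform convergence `dn → d` on compact subsets of `E × E`. -/
def TendstoUnifCompactly {E : Type*} [TopologicalSpace E]
    (dn : ℕ → E → E → ℝ) (d : E → E → ℝ) : Prop :=
  ∀ K : Set (E × E), IsCompact K → ∀ ε : ℝ, 0 < ε →
    ∃ N : ℕ, ∀ n ≥ N, ∀ p ∈ K, |dn n p.1 p.2 - d p.1 p.2| < ε

/-- `e` is a continuous extension of `d : Ω → Ω → ℝ` to the closure of `Ω`. -/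
def IsContExt {X : Type*} [MetricSpace X] (Ω : Set X) (d : Ω → Ω → ℝ)
    (e : closure Ω → closure Ω → ℝ) : Prop :=
  Continuous (fun p : closure Ω × closure Ω => e p.1 p.2) ∧
    ∀ x y : Ω, e ⟨x, subset_closure x.2⟩ ⟨y, subset_closure y.2⟩ = d x y

/-- `(E, d)` is a geodesic space: any two points are joined by a constant-speed curve
`γ : [0,1] → E` whose length on each subinterval `[t,s]` equals `d (γ t) (γ s)`. -/
def IsGeodesicDist {E : Type*} (d : E → E → ℝ) : Prop :=
  ∀ x y : E, ∃ γ : ℝ → E, γ 0 = x ∧ γ 1 = y ∧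
    (∀ t s : ℝ, 0 ≤ t → t ≤ s → s ≤ 1 →
      pathLengthOn d γ t s = pathLength d γ * ENNReal.ofReal (s - t)) ∧
    ∀ t s : ℝ, 0 ≤ t → t ≤ s → s ≤ 1 →
      pathLengthOn d γ t s = ENNReal.ofReal (d (γ t) (γ s))

/-- Uniform convergence on `[0,1]` of a sequence of curves. -/
def UnifConvCurves {E : Type*} [MetricSpace E] (γn : ℕ → ℝ → E) (γ : ℝ → E) : Prop :=
  ∀ ε : ℝ, 0 < ε → ∃ N : ℕ, ∀ n ≥ N, ∀ t ∈ Icc (0 : ℝ) 1, dist (γn n t) (γ t) < ε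

/-- Γ-convergence of the length functionals `L_{dn}` to `L_d` on the space of
Lipschitz curves `[0,1] → E` with the topology of uniform convergence. -/
def GammaConvLengths {E : Type*} [MetricSpace E] (dn : ℕ → E → E → ℝ) (d : E → E → ℝ) : Prop :=
  (∀ (γn : ℕ → ℝ → E) (γ : ℝ → E),
      (∀ n, LipCurve (fun x y : E => dist x y) (γn n)) →
      LipCurve (fun x y : E => dist x y) γ → UnifConvCurves γn γ →
      pathLength d γ ≤ liminf (fun n => pathLength (dn n) (γn n)) atTop) ∧
  ∀ γ : ℝ → E, LipCurve (fun x y : E => dist x y) γ →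
    ∃ γn : ℕ → ℝ → E, (∀ n, LipCurve (fun x y : E => dist x y) (γn n)) ∧
      UnifConvCurves γn γ ∧
      limsup (fun n => pathLength (dn n) (γn n)) atTop ≤ pathLength d γ

section Part1

variable {E : Type*} (d : E → E → ℝ) (γ : ℝ → E)

theorem sum_le_pathLengthOn {a b : ℝ} (k : ℕ) (t : Fin (k+1) → ℝ) (ht : Monotone t)
    (h0 : t 0 = a) (hl : t (Fin.last k) = b) :
    ∑ i : Fin k, ENNReal.ofReal (d (γ (t i.succ)) (γ (t i.castSucc))) ≤ pathLengthOn d γ a b :=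
  le_iSup_of_le k <| le_iSup_of_le t <| le_iSup_of_le ht <| le_iSup_of_le h0 <|
    le_iSup_of_le hl le_rfl

theorem ofReal_le_pathLengthOn {a b : ℝ} (hab : a ≤ b) :
    ENNReal.ofReal (d (γ b) (γ a)) ≤ pathLengthOn d γ a b := by
  have := sum_le_pathLengthOn d γ (a := a) (b := b) 1 (fun i => if (i : ℕ) = 0 then a else b)
    (by
      intro i j hij
      by_cases hi : (i : ℕ) = 0
      · by_cases hj : (j : ℕ) = 0 <;> simp [hi, hj, hab]
      · have hj : (j : ℕ) ≠ 0 := by have := Fin.le_def.mp hij; omega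
        simp [hi, hj])
    (by simp) (by simp [Fin.last])
  simpa [Fin.sum_univ_one] using this

theorem pathLengthOn_self (hrefl : ∀ x, d x x = 0) (a : ℝ) : pathLengthOn d γ a a = 0 := by
  rw [pathLengthOn]
  refine le_antisymm ?_ zero_le
  refine iSup_le fun k => iSup_le fun t => iSup_le fun ht => iSup_le fun h0 => iSup_le fun hl => ?_
  have hta : ∀ i, t i = a := fun i =>
    le_antisymm (hl ▸ ht (Fin.le_last i)) (h0 ▸ ht (Fin.zero_le i))
  simp [hta, hrefl]

theorem pathLengthOn_le_of_eqOn {γ' : ℝ → E} {a b : ℝ}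
    (h : ∀ s, a ≤ s → s ≤ b → γ s = γ' s) :
    pathLengthOn d γ a b ≤ pathLengthOn d γ' a b := by
  refine iSup_le fun k => iSup_le fun t => iSup_le fun ht => iSup_le fun h0 => iSup_le fun hl => ?_
  have hmem : ∀ i, a ≤ t i ∧ t i ≤ b := fun i =>
    ⟨h0 ▸ ht (Fin.zero_le i), hl ▸ ht (Fin.le_last i)⟩
  have : ∀ i : Fin k, γ (t i.succ) = γ' (t i.succ) ∧ γ (t i.castSucc) = γ' (t i.castSucc) :=
    fun i => ⟨h _ (hmem _).1 (hmem _).2, h _ (hmem _).1 (hmem _).2⟩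
  calc ∑ i : Fin k, ENNReal.ofReal (d (γ (t i.succ)) (γ (t i.castSucc)))
      = ∑ i : Fin k, ENNReal.ofReal (d (γ' (t i.succ)) (γ' (t i.castSucc))) := by
        refine Finset.sum_congr rfl fun i _ => by rw [(this i).1, (this i).2]
    _ ≤ _ := sum_le_pathLengthOn d γ' k t ht h0 hl

theorem pathLengthOn_congr {γ' : ℝ → E} {a b : ℝ}
    (h : ∀ s, a ≤ s → s ≤ b → γ s = γ' s) :
    pathLengthOn d γ a b = pathLengthOn d γ' a b :=
  le_antisymm (pathLengthOn_le_of_eqOn d γ h)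
    (pathLengthOn_le_of_eqOn d γ' fun s h1 h2 => (h s h1 h2).symm)

theorem pathLengthOn_comp_mono {φ : ℝ → ℝ} (hφ : Monotone φ) (a b : ℝ) :
    pathLengthOn d (fun s => γ (φ s)) a b ≤ pathLengthOn d γ (φ a) (φ b) := by
  refine iSup_le fun k => iSup_le fun t => iSup_le fun ht => iSup_le fun h0 => iSup_le fun hl => ?_
  exact sum_le_pathLengthOn d γ k (fun i => φ (t i)) (hφ.comp ht) (congrArg φ h0) (congrArg φ hl)

theorem pathLengthOn_map {E' : Type*} {d' : E' → E' → ℝ} {f : E → E'}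
    (hf : ∀ x y, d' (f x) (f y) = d x y) (σ : ℝ → E) (a b : ℝ) :
    pathLengthOn d' (fun s => f (σ s)) a b = pathLengthOn d σ a b := by
  rw [pathLengthOn, pathLengthOn]
  refine iSup_congr fun k => iSup_congr fun t => iSup_congr fun ht => iSup_congr fun h0 =>
    iSup_congr fun hl => Finset.sum_congr rfl fun i _ => by rw [hf]

end Part1
section Part2

variable {E : Type*} (d : E → E → ℝ) (γ : ℝ → E)

theorem pathLengthOn_mono_right {a x b : ℝ} (hxb : x ≤ b) :
    pathLengthOn d γ a x ≤ pathLengthOn d γ a b := by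
  refine iSup_le fun k => iSup_le fun t => iSup_le fun ht => iSup_le fun h0 => iSup_le fun hl => ?_
  set t' : Fin (k+2) → ℝ := fun i => if h : (i : ℕ) < k + 1 then t ⟨i, h⟩ else b with ht'
  have htle : ∀ i : Fin (k+1), t i ≤ b := fun i => le_trans (hl ▸ ht (Fin.le_last i)) hxb
  have ht'c : ∀ i : Fin (k+1), t' i.castSucc = t i := fun i => dif_pos i.isLt
  have ht'l : t' (Fin.last (k+1)) = b := dif_neg (by simp)
  have hmono : Monotone t' := by
    intro i j hij
    simp only [ht']
    by_cases hi : (i : ℕ) < k + 1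
    · by_cases hj : (j : ℕ) < k + 1
      · rw [dif_pos hi, dif_pos hj]
        exact ht (Fin.mk_le_mk.mpr (Fin.le_def.mp hij))
      · rw [dif_pos hi, dif_neg hj]
        exact htle _
    · have hj : ¬ (j : ℕ) < k + 1 := fun h => hi (lt_of_le_of_lt (Fin.le_def.mp hij) h)
      rw [dif_neg hi, dif_neg hj]
  have hsum := sum_le_pathLengthOn d γ (a := a) (b := b) (k+1) t' hmono
    ((ht'c 0).trans h0) ht'l
  refine le_trans ?_ hsum
  rw [Fin.sum_univ_castSucc (fun i : Fin (k+1) =>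
    ENNReal.ofReal (d (γ (t' i.succ)) (γ (t' i.castSucc))))]
  refine le_trans ?_ (le_add_of_nonneg_right zero_le)
  refine le_of_eq (Finset.sum_congr rfl fun i _ => ?_)
  have h1 : (i.castSucc).succ = (Fin.castSucc (i.succ)) := Fin.ext (by simp)
  rw [h1, ht'c, ht'c]

theorem pathLengthOn_subadd (htri : ∀ x y z, d x z ≤ d x y + d y z) (hrefl : ∀ x, d x x = 0)
    {a b c : ℝ} (hab : a ≤ b) (hbc : b ≤ c) :
    pathLengthOn d γ a c ≤ pathLengthOn d γ a b + pathLengthOn d γ b c := by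
  refine iSup_le fun k => iSup_le fun t => iSup_le fun ht => iSup_le fun h0 => iSup_le fun hl => ?_
  have key : ∀ i : Fin k, ENNReal.ofReal (d (γ (t i.succ)) (γ (t i.castSucc))) ≤
      ENNReal.ofReal (d (γ (min (t i.succ) b)) (γ (min (t i.castSucc) b))) +
      ENNReal.ofReal (d (γ (max (t i.succ) b)) (γ (max (t i.castSucc) b))) := by
    intro i
    have hcs : t i.castSucc ≤ t i.succ := ht (Fin.castSucc_le_succ i)
    by_cases h1 : t i.succ ≤ b
    · have h2 : t i.castSucc ≤ b := le_trans hcs h1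
      rw [min_eq_left h1, min_eq_left h2, max_eq_right h1, max_eq_right h2, hrefl]
      simp
    · by_cases h2 : b ≤ t i.castSucc
      · have h1' : b ≤ t i.succ := le_trans h2 hcs
        rw [min_eq_right h1', min_eq_right h2, max_eq_left h1', max_eq_left h2, hrefl]
        simp
      · push_neg at h1 h2
        rw [min_eq_right h1.le, min_eq_left h2.le, max_eq_left h1.le, max_eq_right h2.le]
        calc ENNReal.ofReal (d (γ (t i.succ)) (γ (t i.castSucc)))
            ≤ ENNReal.ofReal (d (γ (t i.succ)) (γ b) + d (γ b) (γ (t i.castSucc))) :=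
              ENNReal.ofReal_le_ofReal (htri _ _ _)
          _ ≤ _ := by
              rw [add_comm (ENNReal.ofReal (d (γ b) (γ (t i.castSucc))))]
              exact le_trans ENNReal.ofReal_add_le (by rw [add_comm])
  calc ∑ i : Fin k, ENNReal.ofReal (d (γ (t i.succ)) (γ (t i.castSucc)))
      ≤ ∑ i : Fin k, (ENNReal.ofReal (d (γ (min (t i.succ) b)) (γ (min (t i.castSucc) b))) +
          ENNReal.ofReal (d (γ (max (t i.succ) b)) (γ (max (t i.castSucc) b)))) :=
        Finset.sum_le_sum fun i _ => key i
    _ = ∑ i : Fin k, ENNReal.ofReal (d (γ (min (t i.succ) b)) (γ (min (t i.castSucc) b))) +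
        ∑ i : Fin k, ENNReal.ofReal (d (γ (max (t i.succ) b)) (γ (max (t i.castSucc) b))) :=
        Finset.sum_add_distrib
    _ ≤ _ := by
        refine add_le_add ?_ ?_
        · exact sum_le_pathLengthOn d γ k (fun i => min (t i) b)
            (fun i j hij => min_le_min (ht hij) le_rfl)
            (by show t 0 ⊓ b = a; rw [h0]; exact min_eq_left hab) (by show t (Fin.last k) ⊓ b = b; rw [hl]; exact min_eq_right hbc)
        · exact sum_le_pathLengthOn d γ k (fun i => max (t i) b)
            (fun i j hij => max_le_max (ht hij) le_rfl)
            (by show t 0 ⊔ b = b; rw [h0]; exact max_eq_right hab) (by show t (Fin.last k) ⊔ b = c; rw [hl]; exact max_eq_left hbc)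

theorem pathLengthOn_le_sum_pieces (htri : ∀ x y z, d x z ≤ d x y + d y z)
    (hrefl : ∀ x, d x x = 0) (u : ℕ → ℝ) (hu : Monotone u) (m : ℕ) :
    pathLengthOn d γ (u 0) (u m) ≤
      ∑ j ∈ Finset.range m, pathLengthOn d γ (u j) (u (j+1)) := by
  induction m with
  | zero => simp [pathLengthOn_self d γ hrefl]
  | succ m ih =>
      calc pathLengthOn d γ (u 0) (u (m+1))
          ≤ pathLengthOn d γ (u 0) (u m) + pathLengthOn d γ (u m) (u (m+1)) :=
            pathLengthOn_subadd d γ htri hrefl (hu (Nat.zero_le m)) (hu (Nat.le_succ m))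
        _ ≤ _ := by rw [Finset.sum_range_succ]; exact add_le_add_left ih _

end Part2
section Part3

variable {X : Type*} [MetricSpace X] {Ω : Set X}

/-- Inclusion of `Ω` into its closure. -/
def clIncl (Ω : Set X) : Ω → closure Ω := fun x => ⟨x, subset_closure x.2⟩

theorem denseRange_clIncl : DenseRange (clIncl Ω) := by
  intro z
  rw [Metric.mem_closure_iff]
  intro ε hε
  obtain ⟨x, hxΩ, hx⟩ := Metric.mem_closure_iff.mp z.2 ε hε
  exact ⟨clIncl Ω ⟨x, hxΩ⟩, mem_range_self _, by rwa [Subtype.dist_eq]⟩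

theorem le_of_denseRange {A B : Type*} [TopologicalSpace A] [TopologicalSpace B] {j : A → B}
    (hj : DenseRange j) {f g : B → ℝ} (hf : Continuous f) (hg : Continuous g)
    (h : ∀ a, f (j a) ≤ g (j a)) (b : B) : f b ≤ g b := by
  have hs : closure (range j) ⊆ {q | f q ≤ g q} :=
    closure_minimal (by rintro q ⟨a, rfl⟩; exact h a) (isClosed_le hf hg)
  exact hs (by rw [hj.closure_eq]; trivial)

variable {α : ℝ} {d : Ω → Ω → ℝ} {e : closure Ω → closure Ω → ℝ}

theorem ext_app (he : IsContExt Ω d e) (u v : Ω) :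
    e (clIncl Ω u) (clIncl Ω v) = d u v := he.2 u v

theorem memD_lip (hα : 0 < α) (hd : MemD α Ω d) (u v u' v' : Ω) :
    |d u v - d u' v'| ≤ α * (dist (u : X) (u' : X) + dist (v : X) (v' : X)) := by
  obtain ⟨⟨hsym, htri, _⟩, _, hcomp⟩ := hd
  have h1 : d u v - d u' v' ≤ d u u' + d v v' := by
    have := htri u u' v
    have := htri u' v' v
    have := hsym v' v
    have := hsym u v
    have h5 := htri v u' v'
    have := hsym v u'
    have := hsym u' u
    nlinarith [htri u u' v', htri u' v' v, hsym v v', htri u v v']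
  have h2 : d u' v' - d u v ≤ d u u' + d v v' := by
    nlinarith [htri u' u v', htri u v' v, hsym v' v, htri u' u v, hsym u u', hsym v v',
      htri u v v']
  have h3 : d u u' ≤ α * dist (u : X) (u' : X) := (hcomp u u').2
  have h4 : d v v' ≤ α * dist (v : X) (v' : X) := (hcomp v v').2
  rw [abs_sub_le_iff]
  constructor <;> nlinarith

theorem ext_lip (hα : 0 < α) (hd : MemD α Ω d) (he : IsContExt Ω d e) :
    ∀ x y x' y' : closure Ω, |e x y - e x' y'| ≤ α * (dist x x' + dist y y') := by
  intro x y x' y'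
  have hdr : DenseRange (Prod.map (Prod.map (clIncl Ω) (clIncl Ω))
      (Prod.map (clIncl Ω) (clIncl Ω))) :=
    (denseRange_clIncl.prodMap denseRange_clIncl).prodMap
      (denseRange_clIncl.prodMap denseRange_clIncl)
  have hcont : Continuous fun z : (closure Ω × closure Ω) × closure Ω × closure Ω =>
      |e z.1.1 z.1.2 - e z.2.1 z.2.2| := by
    apply Continuous.abs
    exact (he.1.comp continuous_fst).sub (he.1.comp continuous_snd)
  have hcont2 : Continuous fun z : (closure Ω × closure Ω) × closure Ω × closure Ω =>
      α * (dist z.1.1 z.2.1 + dist z.1.2 z.2.2) := by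
    apply Continuous.mul continuous_const
    exact ((continuous_fst.fst).dist (continuous_snd.fst)).add
      ((continuous_fst.snd).dist (continuous_snd.snd))
  have := le_of_denseRange hdr hcont hcont2 (fun a => ?_) ((x, y), (x', y'))
  · exact this
  · obtain ⟨⟨u, v⟩, ⟨u', v'⟩⟩ := a
    show |e (clIncl Ω u) (clIncl Ω v) - e (clIncl Ω u') (clIncl Ω v')| ≤
      α * (dist (clIncl Ω u) (clIncl Ω u') + dist (clIncl Ω v) (clIncl Ω v'))
    rw [ext_app he, ext_app he, Subtype.dist_eq, Subtype.dist_eq]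
    exact memD_lip hα hd u v u' v'

theorem ext_sym (hd : MemD α Ω d) (he : IsContExt Ω d e) :
    ∀ x y : closure Ω, e x y = e y x := by
  intro x y
  have hdr : DenseRange (Prod.map (clIncl Ω) (clIncl Ω)) :=
    denseRange_clIncl.prodMap denseRange_clIncl
  have h1 : Continuous fun p : closure Ω × closure Ω => e p.1 p.2 := he.1
  have h2 : Continuous fun p : closure Ω × closure Ω => e p.2 p.1 :=
    he.1.comp continuous_swap
  have key : ∀ a : Ω × Ω, e (clIncl Ω a.1) (clIncl Ω a.2) = e (clIncl Ω a.2) (clIncl Ω a.1) := by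
    rintro ⟨u, v⟩
    show e (clIncl Ω u) (clIncl Ω v) = e (clIncl Ω v) (clIncl Ω u)
    rw [ext_app he, ext_app he, hd.1.1]
  exact le_antisymm
    (le_of_denseRange hdr h1 h2 (fun a => (key a).le) (x, y))
    (le_of_denseRange hdr h2 h1 (fun a => (key a).ge) (x, y))

theorem ext_tri (hd : MemD α Ω d) (he : IsContExt Ω d e) :
    ∀ x y z : closure Ω, e x z ≤ e x y + e y z := by
  intro x y z
  have hdr : DenseRange (Prod.map (clIncl Ω) (Prod.map (clIncl Ω) (clIncl Ω))) :=
    denseRange_clIncl.prodMap (denseRange_clIncl.prodMap denseRange_clIncl)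
  have h1 : Continuous fun w : closure Ω × closure Ω × closure Ω => e w.1 w.2.2 :=
    he.1.comp (continuous_fst.prodMk continuous_snd.snd)
  have h2 : Continuous fun w : closure Ω × closure Ω × closure Ω => e w.1 w.2.1 + e w.2.1 w.2.2 :=
    (he.1.comp (continuous_fst.prodMk continuous_snd.fst)).add
      (he.1.comp (continuous_snd.fst.prodMk continuous_snd.snd))
  refine le_of_denseRange hdr h1 h2 (fun a => ?_) (x, y, z)
  obtain ⟨u, v, w⟩ := a
  show e (clIncl Ω u) (clIncl Ω w) ≤ e (clIncl Ω u) (clIncl Ω v) + e (clIncl Ω v) (clIncl Ω w)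
  rw [ext_app he, ext_app he, ext_app he]
  exact hd.1.2.1 u v w

theorem ext_bounds (hα : 0 < α) (hd : MemD α Ω d) (he : IsContExt Ω d e) :
    ∀ x y : closure Ω, α⁻¹ * dist x y ≤ e x y ∧ e x y ≤ α * dist x y := by
  intro x y
  have hdr : DenseRange (Prod.map (clIncl Ω) (clIncl Ω)) :=
    denseRange_clIncl.prodMap denseRange_clIncl
  have h1 : Continuous fun p : closure Ω × closure Ω => e p.1 p.2 := he.1
  have hlo : Continuous fun p : closure Ω × closure Ω => α⁻¹ * dist p.1 p.2 :=
    continuous_const.mul (continuous_fst.dist continuous_snd)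
  have hhi : Continuous fun p : closure Ω × closure Ω => α * dist p.1 p.2 :=
    continuous_const.mul (continuous_fst.dist continuous_snd)
  constructor
  · refine le_of_denseRange hdr hlo h1 (fun a => ?_) (x, y)
    obtain ⟨u, v⟩ := a
    show α⁻¹ * dist (clIncl Ω u) (clIncl Ω v) ≤ e (clIncl Ω u) (clIncl Ω v)
    rw [ext_app he, Subtype.dist_eq]
    exact (hd.2.2 u v).1
  · refine le_of_denseRange hdr h1 hhi (fun a => ?_) (x, y)
    obtain ⟨u, v⟩ := a
    show e (clIncl Ω u) (clIncl Ω v) ≤ α * dist (clIncl Ω u) (clIncl Ω v)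
    rw [ext_app he, Subtype.dist_eq]
    exact (hd.2.2 u v).2

theorem ext_nonneg (hα : 0 < α) (hd : MemD α Ω d) (he : IsContExt Ω d e) (x y : closure Ω) :
    0 ≤ e x y :=
  le_trans (by positivity) ((ext_bounds hα hd he x y).1)

theorem ext_refl (hα : 0 < α) (hd : MemD α Ω d) (he : IsContExt Ω d e) (x : closure Ω) :
    e x x = 0 := by
  have h := (ext_bounds hα hd he x x).2
  have h2 := ext_nonneg hα hd he x x
  simp only [dist_self, mul_zero] at h
  linarith

theorem ext_dist_le (hα : 0 < α) (hd : MemD α Ω d) (he : IsContExt Ω d e) (x y : closure Ω) :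
    dist x y ≤ α * e x y := by
  have h := (ext_bounds hα hd he x y).1
  have := mul_le_mul_of_nonneg_left h (le_of_lt hα)
  rwa [← mul_assoc, mul_inv_cancel₀ (ne_of_gt hα), one_mul] at this

end Part3
section Part4

variable {X : Type*} [MetricSpace X] {Ω : Set X} {α : ℝ}
  {dn : ℕ → Ω → Ω → ℝ} {d : Ω → Ω → ℝ}
  {en : ℕ → closure Ω → closure Ω → ℝ} {e : closure Ω → closure Ω → ℝ}

theorem keyA (hα : 0 < α) (hdn : ∀ n, MemD α Ω (dn n)) (hd : MemD α Ω d)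
    (hconv : TendstoUnifCompactly dn d)
    (hen : ∀ n, IsContExt Ω (dn n) (en n)) (he : IsContExt Ω d e)
    (C : Set (closure Ω)) (hC : IsCompact C) {ε : ℝ} (hε : 0 < ε) :
    ∃ N, ∀ n ≥ N, ∀ x ∈ C, ∀ y ∈ C, |en n x y - e x y| ≤ ε := by
  set δ : ℝ := ε / (16 * α) with hδdef
  have hδ : 0 < δ := by positivity
  have hch : ∀ c : closure Ω, ∃ x : Ω, dist (c : X) (x : X) < δ := by
    intro c
    obtain ⟨b, hbΩ, hb⟩ := Metric.mem_closure_iff.mp c.2 δ hδ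
    exact ⟨⟨b, hbΩ⟩, hb⟩
  choose w hw using hch
  obtain ⟨t, ht⟩ := hC.elim_finite_subcover (fun c : closure Ω => Metric.ball c δ)
    (fun _ => Metric.isOpen_ball) (fun x hx => mem_iUnion.mpr ⟨x, Metric.mem_ball_self hδ⟩)
  set K₀ : Set (Ω × Ω) := (fun c : closure Ω × closure Ω => (w c.1, w c.2)) '' (↑t ×ˢ ↑t)
    with hK₀
  have hK₀fin : K₀.Finite := ((t.finite_toSet.prod t.finite_toSet).image _)
  obtain ⟨N, hN⟩ := hconv K₀ hK₀fin.isCompact (ε/2) (by positivity)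
  refine ⟨N, fun n hn x hx y hy => ?_⟩
  obtain ⟨c, hct, hxc⟩ := mem_iUnion₂.mp (ht hx)
  obtain ⟨c', hct', hyc⟩ := mem_iUnion₂.mp (ht hy)
  have hdx : dist x (clIncl Ω (w c)) < 2 * δ := by
    calc dist x (clIncl Ω (w c)) ≤ dist x c + dist c (clIncl Ω (w c)) := dist_triangle _ _ _
      _ < δ + δ := add_lt_add (Metric.mem_ball.mp hxc) (by rw [Subtype.dist_eq]; exact hw c)
      _ = 2 * δ := by ring
  have hdy : dist y (clIncl Ω (w c')) < 2 * δ := by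
    calc dist y (clIncl Ω (w c')) ≤ dist y c' + dist c' (clIncl Ω (w c')) := dist_triangle _ _ _
      _ < δ + δ := add_lt_add (Metric.mem_ball.mp hyc) (by rw [Subtype.dist_eq]; exact hw c')
      _ = 2 * δ := by ring
  have e1 : |en n x y - en n (clIncl Ω (w c)) (clIncl Ω (w c'))| ≤
      α * (dist x (clIncl Ω (w c)) + dist y (clIncl Ω (w c'))) :=
    ext_lip hα (hdn n) (hen n) _ _ _ _
  have e3 : |e (clIncl Ω (w c)) (clIncl Ω (w c')) - e x y| ≤
      α * (dist (clIncl Ω (w c)) x + dist (clIncl Ω (w c')) y) :=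
    ext_lip hα hd he _ _ _ _
  have e2 : |dn n (w c) (w c') - d (w c) (w c')| < ε/2 :=
    hN n hn (w c, w c') ⟨(c, c'), ⟨hct, hct'⟩, rfl⟩
  rw [ext_app (hen n)] at e1
  rw [ext_app he] at e3
  rw [dist_comm (clIncl Ω (w c)) x, dist_comm (clIncl Ω (w c')) y] at e3
  have htr : |en n x y - e x y| ≤ |en n x y - dn n (w c) (w c')| +
      |dn n (w c) (w c') - d (w c) (w c')| + |d (w c) (w c') - e x y| := by
    have := abs_sub_le (en n x y) (dn n (w c) (w c')) (e x y)
    have := abs_sub_le (dn n (w c) (w c')) (d (w c) (w c')) (e x y)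
    linarith
  have hα4 : α * (dist x (clIncl Ω (w c)) + dist y (clIncl Ω (w c'))) ≤ α * (4 * δ) := by
    apply mul_le_mul_of_nonneg_left _ hα.le
    linarith
  have : α * (4 * δ) = ε / 4 := by
    rw [hδdef]; field_simp; ring
  linarith

theorem keyA' (hα : 0 < α) (hdn : ∀ n, MemD α Ω (dn n)) (hd : MemD α Ω d)
    (hconv : TendstoUnifCompactly dn d)
    (hen : ∀ n, IsContExt Ω (dn n) (en n)) (he : IsContExt Ω d e)
    {x y : closure Ω} {xs ys : ℕ → closure Ω}
    (hx : Filter.Tendsto xs Filter.atTop (nhds x)) (hy : Filter.Tendsto ys Filter.atTop (nhds y)) :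
    Filter.Tendsto (fun n => en n (xs n) (ys n)) Filter.atTop (nhds (e x y)) := by
  rw [Metric.tendsto_atTop]
  intro ε hε
  have hC : IsCompact ((insert x (range xs)) ∪ (insert y (range ys))) :=
    hx.isCompact_insert_range.union hy.isCompact_insert_range
  obtain ⟨N₁, hN₁⟩ := keyA hα hdn hd hconv hen he _ hC (half_pos (half_pos hε))
  have hcont : Filter.Tendsto (fun n => e (xs n) (ys n)) Filter.atTop (𝓝 (e x y)) :=
    (he.1.tendsto (x, y)).comp (hx.prodMk_nhds hy)
  obtain ⟨N₂, hN₂⟩ := Metric.tendsto_atTop.mp hcont (ε/2) (half_pos hε)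
  refine ⟨max N₁ N₂, fun n hn => ?_⟩
  have h1 := hN₁ n (le_trans (le_max_left _ _) hn) (xs n)
    (Or.inl (mem_insert_iff.mpr (Or.inr (mem_range_self n)))) (ys n)
    (Or.inr (mem_insert_iff.mpr (Or.inr (mem_range_self n))))
  have h2 := hN₂ n (le_trans (le_max_right _ _) hn)
  rw [Real.dist_eq] at h2 ⊢
  have : en n (xs n) (ys n) - e x y =
      (en n (xs n) (ys n) - e (xs n) (ys n)) + (e (xs n) (ys n) - e x y) := by ring
  rw [this]
  calc |_ + _| ≤ |en n (xs n) (ys n) - e (xs n) (ys n)| + |e (xs n) (ys n) - e x y| :=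
        abs_add_le _ _
    _ < ε := by linarith [abs_nonneg (en n (xs n) (ys n) - e (xs n) (ys n))]

end Part4
section Part5

variable {X : Type*} [MetricSpace X] {Ω : Set X} {α : ℝ}
  {dn : ℕ → Ω → Ω → ℝ} {d : Ω → Ω → ℝ}
  {en : ℕ → closure Ω → closure Ω → ℝ} {e : closure Ω → closure Ω → ℝ}

theorem liminf_part (hα : 0 < α) (hdn : ∀ n, MemD α Ω (dn n)) (hd : MemD α Ω d)
    (hconv : TendstoUnifCompactly dn d)
    (hen : ∀ n, IsContExt Ω (dn n) (en n)) (he : IsContExt Ω d e)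
    (γn : ℕ → ℝ → closure Ω) (γ : ℝ → closure Ω) (hconvγ : UnifConvCurves γn γ) :
    pathLength e γ ≤ Filter.liminf (fun n => pathLength (en n) (γn n)) Filter.atTop := by
  rw [pathLength, pathLengthOn]
  refine iSup_le fun k => iSup_le fun t => iSup_le fun ht => iSup_le fun h0 => iSup_le fun hl => ?_
  have hmem : ∀ i : Fin (k+1), t i ∈ Icc (0:ℝ) 1 := fun i =>
    ⟨h0 ▸ ht (Fin.zero_le i), hl ▸ ht (Fin.le_last i)⟩
  have hpt : ∀ s ∈ Icc (0:ℝ) 1, Filter.Tendsto (fun n => γn n s) Filter.atTop (𝓝 (γ s)) := by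
    intro s hs
    rw [Metric.tendsto_atTop]
    intro ε hε
    obtain ⟨N, hN⟩ := hconvγ ε hε
    exact ⟨N, fun n hn => hN n hn s hs⟩
  have hSn : Filter.Tendsto
      (fun n => ∑ i : Fin k, ENNReal.ofReal (en n (γn n (t i.succ)) (γn n (t i.castSucc))))
      Filter.atTop (𝓝 (∑ i : Fin k, ENNReal.ofReal (e (γ (t i.succ)) (γ (t i.castSucc))))) := by
    refine tendsto_finset_sum _ fun i _ => ENNReal.tendsto_ofReal ?_
    exact keyA' hα hdn hd hconv hen he (hpt _ (hmem _)) (hpt _ (hmem _))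
  calc ∑ i : Fin k, ENNReal.ofReal (e (γ (t i.succ)) (γ (t i.castSucc)))
      = Filter.liminf (fun n =>
          ∑ i : Fin k, ENNReal.ofReal (en n (γn n (t i.succ)) (γn n (t i.castSucc))))
          Filter.atTop := (hSn.liminf_eq).symm
    _ ≤ Filter.liminf (fun n => pathLength (en n) (γn n)) Filter.atTop := by
        refine Filter.liminf_le_liminf (Filter.Eventually.of_forall fun n => ?_)
        exact sum_le_pathLengthOn (en n) (γn n) k t ht h0 hl

end Part5
section Part6

theorem lip_glue {E : Type*} [PseudoMetricSpace E] (f : ℝ → E) (M : ℝ) (k : ℕ) (hk : 0 < k)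
    (h : ∀ j, j < k → ∀ s u : ℝ, (j:ℝ)/k ≤ s → s ≤ u → u ≤ ((j:ℝ)+1)/k →
      dist (f s) (f u) ≤ M * (u - s)) :
    ∀ s u : ℝ, 0 ≤ s → s ≤ u → u ≤ 1 → dist (f s) (f u) ≤ M * (u - s) := by
  have hkR : (0:ℝ) < k := Nat.cast_pos.mpr hk
  have key : ∀ m : ℕ, m ≤ k → ∀ s u : ℝ, 0 ≤ s → s ≤ u → u ≤ (m:ℝ)/k →
      dist (f s) (f u) ≤ M * (u - s) := by
    intro m
    induction m with
    | zero =>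
        intro _ s u hs hsu hu
        have hu0 : u ≤ 0 := by simpa using hu
        have hsu' : s = u := le_antisymm hsu (hu0.trans hs)
        rw [hsu']
        simp
    | succ m ih =>
        intro hm1 s u hs hsu hu
        have hmk : m ≤ k := Nat.le_of_succ_le hm1
        have hmlt : m < k := hm1
        have hu' : u ≤ ((m:ℝ)+1)/k := by push_cast at hu; linarith
        by_cases hum : u ≤ (m:ℝ)/k
        · exact ih hmk s u hs hsu hum
        · push_neg at hum
          by_cases hsm : (m:ℝ)/k ≤ s
          · exact h m hmlt s u hsm hsu hu'
          · push_neg at hsm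
            have hmk0 : (0:ℝ) ≤ (m:ℝ)/k := by positivity
            have h1 := ih hmk s ((m:ℝ)/k) hs hsm.le le_rfl
            have h2 := h m hmlt ((m:ℝ)/k) u le_rfl hum.le hu'
            calc dist (f s) (f u) ≤ dist (f s) (f ((m:ℝ)/k)) + dist (f ((m:ℝ)/k)) (f u) :=
                  dist_triangle _ _ _
              _ ≤ M * ((m:ℝ)/k - s) + M * (u - (m:ℝ)/k) := add_le_add h1 h2
              _ = M * (u - s) := by ring
  intro s u hs hsu hu
  exact key k le_rfl s u hs hsu (by rw [div_self (ne_of_gt hkR)]; exact hu)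

end Part6
section Part7

variable {X : Type*} [MetricSpace X] {Ω : Set X} {α : ℝ}
  {dn : ℕ → Ω → Ω → ℝ} {d : Ω → Ω → ℝ}
  {en : ℕ → closure Ω → closure Ω → ℝ} {e : closure Ω → closure Ω → ℝ}

set_option maxHeartbeats 2000000 in
theorem recovery [LocallyCompactSpace X] (hα : 1 < α)
    (hdn : ∀ n, MemD α Ω (dn n)) (hd : MemD α Ω d)
    (hconv : TendstoUnifCompactly dn d)
    (hen : ∀ n, IsContExt Ω (dn n) (en n)) (he : IsContExt Ω d e)
    (γ : ℝ → closure Ω) (K : ℝ)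
    (hγ : ∀ s ∈ Icc (0:ℝ) 1, ∀ u ∈ Icc (0:ℝ) 1, dist (γ s) (γ u) ≤ K * |s - u|)
    {ε : ℝ} (hε : 0 < ε) :
    ∃ N, ∀ n ≥ N, ∃ γ' : ℝ → closure Ω,
      LipCurve (fun x y : closure Ω => dist x y) γ' ∧
      (∀ t ∈ Icc (0:ℝ) 1, dist (γ' t) (γ t) ≤ ε) ∧
      pathLength (en n) γ' ≤ pathLength e γ + ENNReal.ofReal ε := by
  haveI : LocallyCompactSpace (closure Ω) := isClosed_closure.locallyCompactSpace
  have hα0 : (0:ℝ) < α := lt_trans zero_lt_one hα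
  set K' : ℝ := max K 1 with hK'def
  have hK' : (0:ℝ) < K' := lt_of_lt_of_le zero_lt_one (le_max_right _ _)
  have hKK' : K ≤ K' := le_max_left _ _
  -- γ is continuous on [0,1]
  have hγlip : LipschitzOnWith (Real.toNNReal K') γ (Icc 0 1) := by
    apply LipschitzOnWith.of_dist_le_mul
    intro s hs u hu
    rw [Real.coe_toNNReal K' hK'.le, Real.dist_eq]
    calc dist (γ s) (γ u) ≤ K * |s - u| := hγ s hs u hu
      _ ≤ K' * |s - u| := mul_le_mul_of_nonneg_right hKK' (abs_nonneg _)
  set S : Set (closure Ω) := γ '' Icc 0 1 with hSdef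
  have hS : IsCompact S := isCompact_Icc.image_of_continuousOn hγlip.continuousOn
  obtain ⟨C, hCcomp, hSC⟩ := exists_compact_superset hS
  obtain ⟨ρ₀, hρ₀, hthick⟩ := hS.exists_thickening_subset_open isOpen_interior hSC
  have hthickC : Metric.thickening ρ₀ S ⊆ C := hthick.trans interior_subset
  -- choice of k
  obtain ⟨k, hk1, hk2, hk3⟩ : ∃ k : ℕ, 1 ≤ k ∧ 2*α ≤ (k:ℝ) ∧ 6*α^2*K'/ε ≤ (k:ℝ) := by
    refine ⟨max 1 ⌈max (2*α) (6*α^2*K'/ε)⌉₊, le_max_left _ _, ?_, ?_⟩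
    · calc 2*α ≤ max (2*α) (6*α^2*K'/ε) := le_max_left _ _
        _ ≤ (⌈max (2*α) (6*α^2*K'/ε)⌉₊ : ℝ) := Nat.le_ceil _
        _ ≤ _ := by exact_mod_cast Nat.cast_le.mpr (le_max_right 1 _)
    · calc 6*α^2*K'/ε ≤ max (2*α) (6*α^2*K'/ε) := le_max_right _ _
        _ ≤ (⌈max (2*α) (6*α^2*K'/ε)⌉₊ : ℝ) := Nat.le_ceil _
        _ ≤ _ := by exact_mod_cast Nat.cast_le.mpr (le_max_right 1 _)
  have hkR : (0:ℝ) < k := by exact_mod_cast hk1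
  -- choice of ρ
  set ρ : ℝ := min (ρ₀/2) (ε/(12*α*α*k)) with hρdef
  have hρ : 0 < ρ := lt_min (by positivity) (by positivity)
  have hρρ₀ : ρ < ρ₀ := lt_of_le_of_lt (min_le_left _ _) (by linarith)
  have hρ2 : ρ ≤ ε/(12*α*α*k) := min_le_right _ _
  -- the partition
  set u : ℕ → ℝ := fun j => ((min j k : ℕ) : ℝ)/(k:ℝ) with hudef
  have humono : Monotone u := by
    intro i j hij
    have hle : ((min i k : ℕ):ℝ) ≤ ((min j k : ℕ):ℝ) := by
      exact_mod_cast min_le_min hij le_rfl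
    exact div_le_div_of_nonneg_right hle hkR.le
  have hu0 : u 0 = 0 := by simp [hudef]
  have huk : u k = 1 := by simp [hudef, div_self (ne_of_gt hkR)]
  have huj : ∀ j ≤ k, u j = (j:ℝ)/k := fun j hj => by
    show ((min j k : ℕ):ℝ)/(k:ℝ) = (j:ℝ)/k
    rw [min_eq_left hj]
  have humem : ∀ j, u j ∈ Icc (0:ℝ) 1 := by
    intro j
    constructor
    · positivity
    · show ((min j k : ℕ):ℝ)/(k:ℝ) ≤ 1
      rw [div_le_one hkR]
      exact_mod_cast Nat.cast_le.mpr (min_le_right j k)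
  -- choice of the points q j ∈ Ω
  have hqex : ∀ j : ℕ, ∃ x : Ω, dist ((γ (u j) : X)) (x : X) < ρ := by
    intro j
    obtain ⟨b, hbΩ, hb⟩ := Metric.mem_closure_iff.mp (γ (u j)).2 ρ hρ
    exact ⟨⟨b, hbΩ⟩, hb⟩
  choose q hq using hqex
  have hqC : ∀ j, clIncl Ω (q j) ∈ C := by
    intro j
    apply hthickC
    rw [Metric.mem_thickening_iff]
    refine ⟨γ (u j), mem_image_of_mem γ (humem j), ?_⟩
    rw [Subtype.dist_eq, dist_comm]
    exact lt_of_lt_of_le (hq j) hρρ₀.le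
  have hqγ : ∀ j, dist (clIncl Ω (q j)) (γ (u j)) < ρ := by
    intro j
    rw [Subtype.dist_eq, dist_comm]
    exact hq j
  have hqq : ∀ j, j < k → dist (q j : X) ((q (j+1) : X)) ≤ 2*ρ + K'/k := by
    intro j hj
    have h1 : dist (γ (u j)) (γ (u (j+1))) ≤ K' / k := by
      have := hγ (u j) (humem j) (u (j+1)) (humem (j+1))
      have habs : |u j - u (j+1)| ≤ 1/(k:ℝ) := by
        rw [huj j hj.le, huj (j+1) hj]
        push_cast
        have heq : (j:ℝ)/k - ((j:ℝ)+1)/k = -(1/k) := by ring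
        rw [heq, abs_neg, abs_of_nonneg (by positivity)]
      calc dist (γ (u j)) (γ (u (j+1))) ≤ K * |u j - u (j+1)| := this
        _ ≤ K' * |u j - u (j+1)| := mul_le_mul_of_nonneg_right hKK' (abs_nonneg _)
        _ ≤ K' * (1/k) := mul_le_mul_of_nonneg_left habs hK'.le
        _ = K' / k := by ring
    calc dist (q j : X) ((q (j+1)) : X)
        ≤ dist ((q j : X)) ((γ (u j) : X)) + dist ((γ (u j) : X)) ((γ (u (j+1)) : X)) +
          dist ((γ (u (j+1)) : X)) ((q (j+1) : X)) := dist_triangle4 _ _ _ _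
      _ ≤ ρ + K'/k + ρ := by
          refine add_le_add (add_le_add ?_ ?_) ?_
          · rw [dist_comm]; exact (hq j).le
          · rw [← Subtype.dist_eq]; exact h1
          · exact (hq (j+1)).le
      _ = 2*ρ + K'/k := by ring
  -- uniform closeness of en to e on C
  obtain ⟨N, hN⟩ := keyA hα0 hdn hd hconv hen he C hCcomp (ε := ε/(3*k)) (by positivity)
  refine ⟨N, fun n hn => ?_⟩
  -- the almost-geodesics
  have hσex : ∀ j : ℕ, ∃ σ : ℝ → Ω, LipCurve (dn n) σ ∧ σ 0 = q j ∧ σ 1 = q (j+1) ∧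
      pathLength (dn n) σ ≤ ENNReal.ofReal (dn n (q j) (q (j+1))) + ENNReal.ofReal (ε/(3*k)) := by
    intro j
    have hinf := (hdn n).2.1 (q j) (q (j+1))
    have hlt : (⨅ (σ : ℝ → Ω) (_ : LipCurve (dn n) σ) (_ : σ 0 = q j) (_ : σ 1 = q (j+1)),
        pathLength (dn n) σ) <
        ENNReal.ofReal (dn n (q j) (q (j+1))) + ENNReal.ofReal (ε/(3*k)) := by
      rw [← hinf]
      exact ENNReal.lt_add_right ENNReal.ofReal_ne_top
        (ne_of_gt (ENNReal.ofReal_pos.mpr (by positivity)))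
    simp only [iInf_lt_iff] at hlt
    obtain ⟨σ, h1, h2, h3, h4⟩ := hlt
    exact ⟨σ, h1, h2, h3, h4.le⟩
  choose σ hσlip hσ0 hσ1 hσlen using hσex
  choose KK hKK using hσlip
  -- nonnegativity of dn
  have hdn0 : ∀ x y : Ω, 0 ≤ dn n x y := by
    intro x y
    refine le_trans ?_ ((hdn n).2.2 x y).1
    positivity
  have hdistdn : ∀ x y : Ω, dist (x:X) (y:X) ≤ α * dn n x y := by
    intro x y
    have h := ((hdn n).2.2 x y).1
    have := mul_le_mul_of_nonneg_left h hα0.le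
    rwa [← mul_assoc, mul_inv_cancel₀ (ne_of_gt hα0), one_mul] at this
  -- the recovery curve
  set γ' : ℝ → closure Ω := fun s =>
    clIncl Ω (σ (min (⌊(k:ℝ)*s⌋₊) (k-1)) ((k:ℝ)*s - ((min (⌊(k:ℝ)*s⌋₊) (k-1) : ℕ) : ℝ)))
    with hγ'def
  -- piece formula
  have hpf : ∀ j, j < k → ∀ s : ℝ, (j:ℝ)/k ≤ s → s ≤ ((j:ℝ)+1)/k →
      γ' s = clIncl Ω (σ j ((k:ℝ)*s - j)) := by
    intro j hj s h1 h2
    have hs0 : 0 ≤ s := le_trans (by positivity) h1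
    have hks0 : 0 ≤ (k:ℝ)*s := mul_nonneg hkR.le hs0
    have hjk : (j:ℝ) ≤ (k:ℝ)*s := by
      rw [div_le_iff₀ hkR] at h1; linarith
    have hks1 : (k:ℝ)*s ≤ (j:ℝ)+1 := by
      rw [le_div_iff₀ hkR] at h2; linarith
    by_cases hcase : (k:ℝ)*s < (j:ℝ)+1
    · have hfl : ⌊(k:ℝ)*s⌋₊ = j := by
        rw [Nat.floor_eq_iff hks0]
        exact ⟨hjk, by push_cast; exact hcase⟩
      have hmin : min (⌊(k:ℝ)*s⌋₊) (k-1) = j := by rw [hfl]; exact min_eq_left (by omega)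
      simp only [hγ'def, hmin]
    · push_neg at hcase
      have hks : (k:ℝ)*s = (j:ℝ)+1 := le_antisymm hks1 hcase
      by_cases hjk1 : j + 1 < k
      · have hfl : ⌊(k:ℝ)*s⌋₊ = j+1 := by
          rw [hks, show (j:ℝ)+1 = ((j+1:ℕ):ℝ) by push_cast; ring]
          exact Nat.floor_natCast _
        have hmin : min (⌊(k:ℝ)*s⌋₊) (k-1) = j+1 := by rw [hfl]; exact min_eq_left (by omega)
        simp only [hγ'def, hmin]
        have ha1 : (k:ℝ)*s - ((j+1:ℕ):ℝ) = 0 := by push_cast; rw [hks]; ring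
        have ha2 : (k:ℝ)*s - (j:ℝ) = 1 := by rw [hks]; ring
        rw [ha1, ha2, hσ0 (j+1), hσ1 j]
      · have hjk1' : j + 1 = k := by omega
        have hfl : ⌊(k:ℝ)*s⌋₊ = k := by
          rw [hks, show (j:ℝ)+1 = ((k:ℕ):ℝ) by rw [← hjk1']; push_cast; ring]
          exact Nat.floor_natCast _
        have hmin : min (⌊(k:ℝ)*s⌋₊) (k-1) = j := by
          rw [hfl, min_eq_right (Nat.sub_le k 1)]; omega
        simp only [hγ'def, hmin]
  -- pieces are within bounds
  have hjs : ∀ s ∈ Icc (0:ℝ) 1, min (⌊(k:ℝ)*s⌋₊) (k-1) < k ∧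
      ((min (⌊(k:ℝ)*s⌋₊) (k-1) : ℕ) : ℝ)/k ≤ s ∧
      s ≤ ((min (⌊(k:ℝ)*s⌋₊) (k-1) : ℕ) : ℝ)/k + 1/k := by
    intro s hs
    have hks0 : 0 ≤ (k:ℝ)*s := mul_nonneg hkR.le hs.1
    refine ⟨lt_of_le_of_lt (min_le_right _ _) (by omega), ?_, ?_⟩
    · rw [div_le_iff₀ hkR]
      calc ((min (⌊(k:ℝ)*s⌋₊) (k-1) : ℕ):ℝ) ≤ (⌊(k:ℝ)*s⌋₊ : ℝ) := by
            exact_mod_cast min_le_left _ _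
        _ ≤ (k:ℝ)*s := Nat.floor_le hks0
        _ = s * k := mul_comm _ _
    · by_cases hc : ⌊(k:ℝ)*s⌋₊ ≤ k-1
      · rw [min_eq_left hc]
        have h2 := Nat.lt_floor_add_one ((k:ℝ)*s)
        rw [← add_div, le_div_iff₀ hkR]
        push_cast
        nlinarith
      · push_neg at hc
        rw [min_eq_right (by omega)]
        have hcast : ((k-1:ℕ):ℝ) = (k:ℝ) - 1 := by
          push_cast [hk1]; ring
        rw [hcast, ← add_div]
        have : ((k:ℝ)-1+1)/k = 1 := by field_simp; ring
        rw [this]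
        exact hs.2
  have hxmem : ∀ j, j < k → ∀ s : ℝ, (j:ℝ)/k ≤ s → s ≤ ((j:ℝ)+1)/k →
      (k:ℝ)*s - j ∈ Icc (0:ℝ) 1 := by
    intro j hj s h1 h2
    constructor
    · rw [div_le_iff₀ hkR] at h1; linarith
    · rw [le_div_iff₀ hkR] at h2; linarith
  refine ⟨γ', ?_, ?_, ?_⟩
  · -- (a) Lipschitz
    set M : ℝ := α * (k:ℝ) * (1 + ∑ j ∈ Finset.range k, |KK j|) with hMdef
    have hB0 : (0:ℝ) ≤ 1 + ∑ j ∈ Finset.range k, |KK j| := by positivity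
    have hsumKK : ∀ j, j < k → KK j ≤ 1 + ∑ i ∈ Finset.range k, |KK i| := by
      intro j hj
      have h1 : |KK j| ≤ ∑ i ∈ Finset.range k, |KK i| :=
        Finset.single_le_sum (fun i _ => abs_nonneg (KK i)) (Finset.mem_range.mpr hj)
      calc KK j ≤ |KK j| := le_abs_self _
        _ ≤ _ := by linarith
    have hpiece : ∀ j, j < k → ∀ s v : ℝ, (j:ℝ)/k ≤ s → s ≤ v → v ≤ ((j:ℝ)+1)/k →
        dist (γ' s) (γ' v) ≤ M * (v - s) := by
      intro j hj s v hs hsv hv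
      rw [hpf j hj s hs (le_trans hsv hv), hpf j hj v (le_trans hs hsv) hv, Subtype.dist_eq]
      have hx1 := hxmem j hj s hs (le_trans hsv hv)
      have hx2 := hxmem j hj v (le_trans hs hsv) hv
      have hΔ : (0:ℝ) ≤ v - s := by linarith
      calc dist ((σ j ((k:ℝ)*s - j) : Ω) : X) ((σ j ((k:ℝ)*v - j) : Ω) : X)
          ≤ α * dn n (σ j ((k:ℝ)*s - j)) (σ j ((k:ℝ)*v - j)) := hdistdn _ _
        _ ≤ α * (KK j * |((k:ℝ)*s - j) - ((k:ℝ)*v - j)|) :=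
            mul_le_mul_of_nonneg_left (hKK j _ hx1 _ hx2) hα0.le
        _ = (α * (k:ℝ) * KK j) * (v - s) := by
            rw [show ((k:ℝ)*s - j) - ((k:ℝ)*v - j) = -((k:ℝ)*(v-s)) by ring, abs_neg,
              abs_of_nonneg (by nlinarith)]
            ring
        _ ≤ M * (v - s) := by
            refine mul_le_mul_of_nonneg_right ?_ hΔ
            rw [hMdef, mul_assoc, mul_assoc]
            refine mul_le_mul_of_nonneg_left ?_ hα0.le
            refine mul_le_mul_of_nonneg_left (hsumKK j hj) hkR.le
    have hglue := lip_glue γ' M k hk1 hpiece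
    refine ⟨M, fun s hs t' ht' => ?_⟩
    rcases le_total s t' with h | h
    · have hg := hglue s t' hs.1 h ht'.2
      rwa [abs_sub_comm, abs_of_nonneg (by linarith)]
    · have hg := hglue t' s ht'.1 h hs.2
      rw [dist_comm] at hg
      rwa [abs_of_nonneg (by linarith)]
  · -- (b) closeness
    intro s hs
    obtain ⟨hjlt, hjs1, hjs2⟩ := hjs s hs
    set j : ℕ := min (⌊(k:ℝ)*s⌋₊) (k-1) with hjdef
    have hs2 : s ≤ ((j:ℝ)+1)/k := by
      have heq : ((j:ℝ)+1)/k = (j:ℝ)/k + 1/k := by ring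
      rw [heq]
      exact hjs2
    have hx := hxmem j hjlt s hjs1 hs2
    rw [hpf j hjlt s hjs1 hs2]
    have t1 : dist (clIncl Ω (σ j ((k:ℝ)*s - j))) (clIncl Ω (q j)) ≤
        α*(α*(2*ρ + K'/k) + ε/(3*k)) := by
      rw [← hσ0 j, Subtype.dist_eq]
      calc dist ((σ j ((k:ℝ)*s - j) : Ω) : X) ((σ j 0 : Ω) : X)
          ≤ α * dn n (σ j ((k:ℝ)*s-j)) (σ j 0) := hdistdn _ _
        _ ≤ α*(α*(2*ρ + K'/k) + ε/(3*k)) := by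
          refine mul_le_mul_of_nonneg_left ?_ hα0.le
          have hen1 : ENNReal.ofReal (dn n (σ j ((k:ℝ)*s-j)) (σ j 0)) ≤
              ENNReal.ofReal (dn n (q j) (q (j+1)) + ε/(3*k)) := by
            calc ENNReal.ofReal (dn n (σ j ((k:ℝ)*s-j)) (σ j 0))
                ≤ pathLengthOn (dn n) (σ j) 0 ((k:ℝ)*s-j) :=
                  ofReal_le_pathLengthOn _ _ hx.1
              _ ≤ pathLengthOn (dn n) (σ j) 0 1 := pathLengthOn_mono_right _ _ hx.2
              _ ≤ ENNReal.ofReal (dn n (q j) (q (j+1))) + ENNReal.ofReal (ε/(3*k)) := hσlen j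
              _ = ENNReal.ofReal (dn n (q j) (q (j+1)) + ε/(3*k)) :=
                  (ENNReal.ofReal_add (hdn0 _ _) (by positivity)).symm
          have hreal : dn n (σ j ((k:ℝ)*s-j)) (σ j 0) ≤ dn n (q j) (q (j+1)) + ε/(3*k) := by
            rw [ENNReal.ofReal_le_ofReal_iff (add_nonneg (hdn0 _ _) (by positivity))] at hen1
            exact hen1
          have h2 : dn n (q j) (q (j+1)) ≤ α * (2*ρ + K'/k) :=
            le_trans ((hdn n).2.2 _ _).2 (mul_le_mul_of_nonneg_left (hqq j hjlt) hα0.le)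
          linarith
    have t3 : dist (γ (u j)) (γ s) ≤ K'/k := by
      have habs : |u j - s| ≤ 1/(k:ℝ) := by
        rw [huj j hjlt.le]
        rw [abs_of_nonpos (by linarith [hjs1])]
        have heq : ((j:ℝ)+1)/k = (j:ℝ)/k + 1/k := by ring
        rw [heq] at hs2
        linarith
      calc dist (γ (u j)) (γ s) ≤ K * |u j - s| := hγ _ (humem j) s hs
        _ ≤ K' * |u j - s| := mul_le_mul_of_nonneg_right hKK' (abs_nonneg _)
        _ ≤ K' * (1/k) := mul_le_mul_of_nonneg_left habs hK'.le
        _ = K'/k := by ring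
    have htotal : dist (clIncl Ω (σ j ((k:ℝ)*s - j))) (γ s) ≤
        α*(α*(2*ρ + K'/k) + ε/(3*k)) + ρ + K'/k := by
      calc dist (clIncl Ω (σ j ((k:ℝ)*s - j))) (γ s)
          ≤ dist (clIncl Ω (σ j ((k:ℝ)*s - j))) (clIncl Ω (q j)) +
            dist (clIncl Ω (q j)) (γ (u j)) + dist (γ (u j)) (γ s) := dist_triangle4 _ _ _ _
        _ ≤ _ := add_le_add (add_le_add t1 (hqγ j).le) t3
    refine le_trans htotal ?_
    -- arithmetic
    have hkR1 : (1:ℝ) ≤ k := by exact_mod_cast hk1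
    have h6 : 6*α^2*K' ≤ ε*k := by
      rw [div_le_iff₀ hε] at hk3; linarith
    have hsq : α^2 = α*α := sq α
    have hαα : (1:ℝ) ≤ α*α := by nlinarith
    have h6K : 6*K' ≤ 6*(α*α)*K' := by
      nlinarith [mul_nonneg (sub_nonneg.mpr hαα) hK'.le]
    have hA : 2*α*α*ρ ≤ ε/(6*k) := by
      have h1 : 2*α*α*ρ ≤ 2*α*α*(ε/(12*α*α*k)) :=
        mul_le_mul_of_nonneg_left hρ2 (by positivity)
      have heq : 2*α*α*(ε/(12*α*α*k)) = ε/(6*k) := by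
        field_simp
        ring
      linarith [heq ▸ h1]
    have hA' : ε/(6*k) ≤ ε/6 := by
      rw [div_le_div_iff₀ (by positivity) (by norm_num)]
      nlinarith
    have hB : α*α*(K'/k) ≤ ε/6 := by
      rw [show α*α*(K'/k) = (α*α*K')/k by ring, div_le_iff₀ hkR]
      nlinarith
    have hC : α*(ε/(3*k)) ≤ ε/6 := by
      rw [show α*(ε/(3*k)) = (α*ε)/(3*k) by ring, div_le_div_iff₀ (by positivity) (by norm_num)]
      nlinarith
    have hααk : (12:ℝ) ≤ 12*α*α*(k:ℝ) := by nlinarith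
    have hD : ρ ≤ ε/12 := le_trans hρ2 (by
      rw [div_le_div_iff₀ (by positivity) (by norm_num)]
      nlinarith [mul_le_mul_of_nonneg_left hααk hε.le])
    have hE : K'/k ≤ ε/6 := by
      rw [div_le_div_iff₀ hkR (by norm_num)]
      linarith [h6, h6K, hsq]
    have hexp : α*(α*(2*ρ + K'/k) + ε/(3*k)) + ρ + K'/k =
        2*α*α*ρ + α*α*(K'/k) + α*(ε/(3*k)) + ρ + K'/k := by ring
    rw [hexp]
    linarith
  · -- (c) length bound
    have htri_en : ∀ x y z : closure Ω, en n x z ≤ en n x y + en n y z :=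
      ext_tri (hdn n) (hen n)
    have hrefl_en : ∀ x : closure Ω, en n x x = 0 := ext_refl hα0 (hdn n) (hen n)
    have hstep1 : pathLength (en n) γ' ≤
        ∑ j ∈ Finset.range k, pathLengthOn (en n) γ' (u j) (u (j+1)) := by
      have h := pathLengthOn_le_sum_pieces (en n) γ' htri_en hrefl_en u humono k
      rw [hu0, huk] at h
      exact h
    have hpiecelen : ∀ j ∈ Finset.range k, pathLengthOn (en n) γ' (u j) (u (j+1)) ≤
        ENNReal.ofReal (e (γ (u (j+1))) (γ (u j))) + ENNReal.ofReal (2*ε/(3*k) + 2*α*ρ) := by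
      intro j hjmem
      have hj : j < k := Finset.mem_range.mp hjmem
      have hujj : u j = (j:ℝ)/k := huj j hj.le
      have hujj1 : u (j+1) = ((j:ℝ)+1)/k := by rw [huj (j+1) hj]; push_cast; ring
      have hcg : pathLengthOn (en n) γ' (u j) (u (j+1)) =
          pathLengthOn (en n) (fun s => clIncl Ω (σ j ((k:ℝ)*s - j))) (u j) (u (j+1)) := by
        apply pathLengthOn_congr
        intro s hls hrs
        exact hpf j hj s (hujj ▸ hls) (hujj1 ▸ hrs)
      have hcm : pathLengthOn (en n) (fun s => clIncl Ω (σ j ((k:ℝ)*s - j))) (u j) (u (j+1)) ≤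
          pathLengthOn (en n) (fun s => clIncl Ω (σ j s))
            ((k:ℝ)*(u j) - j) ((k:ℝ)*(u (j+1)) - j) :=
        pathLengthOn_comp_mono (en n) (fun s => clIncl Ω (σ j s))
          (φ := fun s => (k:ℝ)*s - j) (fun a b hab => by simp only []; nlinarith) _ _
      have hend1 : (k:ℝ)*(u j) - j = 0 := by rw [hujj]; field_simp; ring
      have hend2 : (k:ℝ)*(u (j+1)) - j = 1 := by rw [hujj1]; field_simp; ring
      have hmap : pathLengthOn (en n) (fun s => clIncl Ω (σ j s)) 0 1 =
          pathLengthOn (dn n) (σ j) 0 1 :=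
        pathLengthOn_map (dn n) (fun x y => ext_app (hen n) x y) (σ j) 0 1
      have hcore : dn n (q j) (q (j+1)) ≤ e (γ (u (j+1))) (γ (u j)) + (ε/(3*k) + 2*α*ρ) := by
        have h1 : |en n (clIncl Ω (q j)) (clIncl Ω (q (j+1))) -
            e (clIncl Ω (q j)) (clIncl Ω (q (j+1)))| ≤ ε/(3*k) :=
          hN n hn _ (hqC j) _ (hqC (j+1))
        have h2 : |e (clIncl Ω (q j)) (clIncl Ω (q (j+1))) - e (γ (u j)) (γ (u (j+1)))| ≤
            α * (dist (clIncl Ω (q j)) (γ (u j)) + dist (clIncl Ω (q (j+1))) (γ (u (j+1)))) :=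
          ext_lip hα0 hd he _ _ _ _
        have h3 : dist (clIncl Ω (q j)) (γ (u j)) ≤ ρ := (hqγ j).le
        have h4 : dist (clIncl Ω (q (j+1))) (γ (u (j+1))) ≤ ρ := (hqγ (j+1)).le
        have h5 : e (γ (u j)) (γ (u (j+1))) = e (γ (u (j+1))) (γ (u j)) := ext_sym hd he _ _
        rw [ext_app (hen n)] at h1
        have hαρ : α * (dist (clIncl Ω (q j)) (γ (u j)) +
            dist (clIncl Ω (q (j+1))) (γ (u (j+1)))) ≤ α*(2*ρ) :=
          mul_le_mul_of_nonneg_left (by linarith) hα0.le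
        have ha1 := abs_le.mp h1
        have ha2 := abs_le.mp h2
        linarith [ha1.2, ha2.2, hαρ, h5.le, h5.symm.le]
      have hfin : pathLengthOn (dn n) (σ j) 0 1 ≤
          ENNReal.ofReal (e (γ (u (j+1))) (γ (u j))) + ENNReal.ofReal (2*ε/(3*k) + 2*α*ρ) := by
        calc pathLengthOn (dn n) (σ j) 0 1
            ≤ ENNReal.ofReal (dn n (q j) (q (j+1))) + ENNReal.ofReal (ε/(3*k)) := hσlen j
          _ = ENNReal.ofReal (dn n (q j) (q (j+1)) + ε/(3*k)) :=
              (ENNReal.ofReal_add (hdn0 _ _) (by positivity)).symm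
          _ ≤ ENNReal.ofReal (e (γ (u (j+1))) (γ (u j)) + (2*ε/(3*k) + 2*α*ρ)) :=
              ENNReal.ofReal_le_ofReal (by
                have h2e : 2*ε/(3*(k:ℝ)) = ε/(3*(k:ℝ)) + ε/(3*(k:ℝ)) := by ring
                linarith [hcore, h2e])
          _ ≤ _ := ENNReal.ofReal_add_le
      calc pathLengthOn (en n) γ' (u j) (u (j+1)) = _ := hcg
        _ ≤ _ := hcm
        _ = pathLengthOn (en n) (fun s => clIncl Ω (σ j s)) 0 1 := by rw [hend1, hend2]
        _ = pathLengthOn (dn n) (σ j) 0 1 := hmap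
        _ ≤ _ := hfin
    have hsum2 : ∑ j ∈ Finset.range k, ENNReal.ofReal (e (γ (u (j+1))) (γ (u j))) ≤
        pathLength e γ := by
      have h := sum_le_pathLengthOn e γ (a := 0) (b := 1) k (fun i => u i)
        (fun i j hij => humono hij)
        (by show u ((0 : Fin (k+1)) : ℕ) = 0; exact hu0)
        (by show u ((Fin.last k : Fin (k+1)) : ℕ) = 1; exact huk)
      rw [← Fin.sum_univ_eq_sum_range (fun j => ENNReal.ofReal (e (γ (u (j+1))) (γ (u j)))) k]
      exact h
    have hconst : (k : ℝ≥0∞) * ENNReal.ofReal (2*ε/(3*k) + 2*α*ρ) ≤ ENNReal.ofReal ε := by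
      rw [← ENNReal.ofReal_natCast k, ← ENNReal.ofReal_mul (by positivity)]
      apply ENNReal.ofReal_le_ofReal
      have h2αρk : 2*α*ρ*(k:ℝ) ≤ ε/3 := by
        have h1 : 2*α*(k:ℝ)*ρ ≤ 2*α*(k:ℝ)*(ε/(12*α*α*k)) :=
          mul_le_mul_of_nonneg_left hρ2 (by positivity)
        have heq : 2*α*(k:ℝ)*(ε/(12*α*α*k)) = ε/(6*α) := by field_simp; ring
        have h2 : ε/(6*α) ≤ ε/3 := by
          rw [div_le_div_iff₀ (by positivity) (by norm_num)]
          nlinarith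
        calc 2*α*ρ*(k:ℝ) = 2*α*(k:ℝ)*ρ := by ring
          _ ≤ ε/(6*α) := heq ▸ h1
          _ ≤ ε/3 := h2
      have heq2 : (k:ℝ) * (2*ε/(3*k) + 2*α*ρ) = 2*ε/3 + 2*α*ρ*k := by field_simp
      rw [heq2]
      linarith
    calc pathLength (en n) γ' ≤ _ := hstep1
      _ ≤ (∑ j ∈ Finset.range k, ENNReal.ofReal (e (γ (u (j+1))) (γ (u j)))) +
          (k : ℝ≥0∞) * ENNReal.ofReal (2*ε/(3*k) + 2*α*ρ) := by
          calc _ ≤ ∑ j ∈ Finset.range k, (ENNReal.ofReal (e (γ (u (j+1))) (γ (u j))) +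
                ENNReal.ofReal (2*ε/(3*k) + 2*α*ρ)) := Finset.sum_le_sum hpiecelen
            _ = _ := by
                rw [Finset.sum_add_distrib, Finset.sum_const, Finset.card_range, nsmul_eq_mul]
      _ ≤ pathLength e γ + ENNReal.ofReal ε := add_le_add hsum2 hconst

end Part7
/-- uniform convergence of the distances on compact sets implies
Γ-convergence of the length functionals of the extended distances on Lipschitz
curves into the closure of `Ω`. -/
theorem stmt7 {X : Type*} [MetricSpace X] [LocallyCompactSpace X] [CompleteSpace X]
    (Ω : Set X) (hΩ : IsOpen Ω) (α : ℝ) (hα : 1 < α)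
    (hne : ∃ d₀ : Ω → Ω → ℝ, MemD α Ω d₀)
    (dn : ℕ → Ω → Ω → ℝ) (hdn : ∀ n, MemD α Ω (dn n))
    (d : Ω → Ω → ℝ) (hd : MemD α Ω d)
    (hconv : TendstoUnifCompactly dn d)
    (en : ℕ → closure Ω → closure Ω → ℝ) (hen : ∀ n, IsContExt Ω (dn n) (en n))
    (e : closure Ω → closure Ω → ℝ) (he : IsContExt Ω d e) :
    GammaConvLengths en e := by

  have hα0 : (0:ℝ) < α := lt_trans zero_lt_one hα
  constructor
  · intro γn γ _ _ hconvγ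
    exact liminf_part hα0 hdn hd hconv hen he γn γ hconvγ
  · intro γ hγlip
    obtain ⟨K, hK⟩ := hγlip
    have hrec : ∀ m : ℕ, ∃ N, ∀ n ≥ N, ∃ γ' : ℝ → closure Ω,
        LipCurve (fun x y : closure Ω => dist x y) γ' ∧
        (∀ t ∈ Icc (0:ℝ) 1, dist (γ' t) (γ t) ≤ 1/((m:ℝ)+1)) ∧
        pathLength (en n) γ' ≤ pathLength e γ + ENNReal.ofReal (1/((m:ℝ)+1)) :=
      fun m => recovery hα hdn hd hconv hen he γ K hK (by positivity)
    choose N0 hN0 using hrec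
    set N' : ℕ → ℕ := fun m => max (N0 m) m with hN'def
    set h : ℕ → ℕ := fun n => Nat.findGreatest (fun m => N' m ≤ n) n with hhdef
    have hP : ∀ n, N' (h n) ≤ n → ∃ γ' : ℝ → closure Ω,
        LipCurve (fun x y : closure Ω => dist x y) γ' ∧
        (∀ t ∈ Icc (0:ℝ) 1, dist (γ' t) (γ t) ≤ 1/((h n : ℝ)+1)) ∧
        pathLength (en n) γ' ≤ pathLength e γ + ENNReal.ofReal (1/((h n : ℝ)+1)) :=
      fun n hcond => hN0 (h n) n (le_trans (le_max_left _ _) hcond)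
    have hkey : ∀ m n, N' m ≤ n → m ≤ h n ∧ N' (h n) ≤ n := by
      intro m n hmn
      have hm_le_n : m ≤ n := le_trans (le_max_right (N0 m) m) hmn
      exact ⟨Nat.le_findGreatest hm_le_n hmn,
        Nat.findGreatest_spec (P := fun m => N' m ≤ n) hm_le_n hmn⟩
    classical
    set γn : ℕ → ℝ → closure Ω :=
      fun n => if hc : N' (h n) ≤ n then (hP n hc).choose else γ with hγndef
    refine ⟨γn, ?_, ?_, ?_⟩
    · intro n
      simp only [hγndef]
      by_cases hc : N' (h n) ≤ n
      · rw [dif_pos hc]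
        exact (hP n hc).choose_spec.1
      · rw [dif_neg hc]
        exact ⟨K, hK⟩
    · intro ε hε
      obtain ⟨m, hm⟩ := exists_nat_one_div_lt hε
      refine ⟨N' m, fun n hn t ht => ?_⟩
      obtain ⟨hmh, hcond⟩ := hkey m n hn
      simp only [hγndef]
      rw [dif_pos hcond]
      have hb := (hP n hcond).choose_spec.2.1 t ht
      have hmono : 1/((h n : ℝ)+1) ≤ 1/((m:ℝ)+1) := by
        apply one_div_le_one_div_of_le (by positivity)
        exact_mod_cast Nat.succ_le_succ hmh
      calc dist ((hP n hcond).choose t) (γ t) ≤ 1/((h n : ℝ)+1) := hb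
        _ ≤ 1/((m:ℝ)+1) := hmono
        _ < ε := hm
    · refine ENNReal.le_of_forall_pos_le_add fun ε' hε' _ => ?_
      have hsuf : limsup (fun n => pathLength (en n) (γn n)) atTop ≤
          pathLength e γ + ENNReal.ofReal (ε' : ℝ) := by
        have hε : (0:ℝ) < (ε' : ℝ) := by exact_mod_cast hε'
        obtain ⟨m, hm⟩ := exists_nat_one_div_lt hε
        refine Filter.limsup_le_of_le (by isBoundedDefault) ?_
        filter_upwards [Filter.eventually_ge_atTop (N' m)] with n hn
        obtain ⟨hmh, hcond⟩ := hkey m n hn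
        simp only [hγndef]
        rw [dif_pos hcond]
        have hmono : 1/((h n : ℝ)+1) ≤ 1/((m:ℝ)+1) := by
          apply one_div_le_one_div_of_le (by positivity)
          exact_mod_cast Nat.succ_le_succ hmh
        calc pathLength (en n) (hP n hcond).choose
            ≤ pathLength e γ + ENNReal.ofReal (1/((h n : ℝ)+1)) := (hP n hcond).choose_spec.2.2
          _ ≤ pathLength e γ + ENNReal.ofReal (ε' : ℝ) :=
              add_le_add_right (ENNReal.ofReal_le_ofReal (le_of_lt (lt_of_le_of_lt hmono hm))) _
      rwa [ENNReal.ofReal_coe_nnreal] at hsuf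
end

section
/- Let (X, D) be a locally compact, complete metric space, α > 1, and Ω ⊆ X an open set with D_α(Ω) ≠ ∅. Let (d_n)_{n∈ℕ} ⊆ D_α(Ω) and d ∈ D_α(Ω). Suppose the length functionals L_{d̄_n} Γ-converge to L_{d̄} on Lip([0,1]; Ω̄) with the topology of uniform convergence, i.e.: (liminf) for every sequence of Lipschitz curves γⁿ : [0,1] → Ω̄ converging uniformly to a Lipschitz curve γ one has L_{d̄}(γ) ≤ liminf_n L_{d̄_n}(γⁿ); (limsup) for every Lipschitz curve γ : [0,1] → Ω̄ there exist Lipschitz curves γⁿ converging uniformly to γ with limsup_n L_{d̄_n}(γⁿ) ≤ L_{d̄}(γ). Then d_n → d uniformly on compact subsets of Ω × Ω. -/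
open Filter MeasureTheory Set
open scoped ENNReal Topology

namespace Stmt8Aux

variable {E : Type*} (d : E → E → ℝ) (γ : ℝ → E)

/-- The sum associated to an `ℕ`-indexed partition. -/
noncomputable def chainSum (k : ℕ) (T : ℕ → ℝ) : ℝ≥0∞ :=
  ∑ i ∈ Finset.range k, ENNReal.ofReal (d (γ (T (i + 1))) (γ (T i)))

lemma chainSum_le_pathLengthOn {a b : ℝ} {k : ℕ} {T : ℕ → ℝ}
    (hT : Monotone T) (h0 : T 0 = a) (hk : T k = b) :
    chainSum d γ k T ≤ pathLengthOn d γ a b := by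
  set t : Fin (k + 1) → ℝ := fun i => T i.1 with ht
  have hmono : Monotone t := fun i j hij => hT hij
  have ht0 : t 0 = a := h0
  have htl : t (Fin.last k) = b := hk
  have hsum : (∑ i : Fin k, ENNReal.ofReal (d (γ (t i.succ)) (γ (t i.castSucc))))
      = chainSum d γ k T := by
    rw [chainSum, ← Fin.sum_univ_eq_sum_range]
    exact Finset.sum_congr rfl fun i _ => rfl
  rw [pathLengthOn]
  refine le_iSup_of_le k (le_iSup_of_le t ?_)
  rw [iSup_pos hmono, iSup_pos ht0, iSup_pos htl, hsum]

lemma pathLengthOn_le_of_chains {a b : ℝ} {C : ℝ≥0∞}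
    (H : ∀ (k : ℕ) (T : ℕ → ℝ), Monotone T → T 0 = a → T k = b → chainSum d γ k T ≤ C) :
    pathLengthOn d γ a b ≤ C := by
  rw [pathLengthOn]
  refine iSup_le fun k => iSup_le fun t => iSup_le fun hmono => iSup_le fun ht0 =>
    iSup_le fun htl => ?_
  set T : ℕ → ℝ := fun j => t ⟨min j k, by omega⟩ with hTdef
  have hTm : Monotone T := fun i j hij => hmono (by simp [Fin.mk_le_mk]; omega)
  have hT0 : T 0 = a := by
    have : (⟨min 0 k, by omega⟩ : Fin (k+1)) = 0 := by ext; simp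
    rw [hTdef]; simp only [this]; exact ht0
  have hTk : T k = b := by
    have : (⟨min k k, by omega⟩ : Fin (k+1)) = Fin.last k := by ext; simp
    rw [hTdef]; simp only [this]; exact htl
  have key : (∑ i : Fin k, ENNReal.ofReal (d (γ (t i.succ)) (γ (t i.castSucc))))
      = chainSum d γ k T := by
    rw [chainSum, ← Fin.sum_univ_eq_sum_range]
    refine Finset.sum_congr rfl fun i _ => ?_
    have hi := i.isLt
    have h1 : t i.succ = T (i.1 + 1) := by
      rw [hTdef]; congr 1; ext; simp only [Fin.val_succ]; omega
    have h2 : t i.castSucc = T i.1 := by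
      rw [hTdef]; congr 1; ext; simp only [Fin.coe_castSucc]; omega
    rw [h1, h2]
  rw [key]; exact H k T hTm hT0 hTk

/-- Partitions of `[a,b]` as a type. -/
def PChain (a b : ℝ) : Type :=
  {p : ℕ × (ℕ → ℝ) // Monotone p.2 ∧ p.2 0 = a ∧ p.2 p.1 = b}

lemma pathLengthOn_eq_iSup_chain (a b : ℝ) :
    pathLengthOn d γ a b = ⨆ p : PChain a b, chainSum d γ p.1.1 p.1.2 :=
  le_antisymm
    (pathLengthOn_le_of_chains _ _ fun k T h1 h2 h3 =>
      le_iSup_of_le (⟨(k, T), h1, h2, h3⟩ : PChain a b) le_rfl)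
    (iSup_le fun p => chainSum_le_pathLengthOn _ _ p.2.1 p.2.2.1 p.2.2.2)

lemma nonempty_pchain {a b : ℝ} (hab : a ≤ b) : Nonempty (PChain a b) := by
  refine ⟨⟨(1, fun j => if j = 0 then a else b), ?_, by simp, by simp⟩⟩
  intro i j hij
  dsimp only
  split_ifs with h1 h2 h2
  · exact le_rfl
  · exact hab
  · omega
  · exact le_rfl

lemma ofReal_le_pathLengthOn {a b : ℝ} (hab : a ≤ b) :
    ENNReal.ofReal (d (γ b) (γ a)) ≤ pathLengthOn d γ a b := by
  have hmono : Monotone (fun j : ℕ => if j = 0 then a else b) := by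
    intro i j hij; dsimp only; split_ifs with h1 h2 h2
    · exact le_rfl
    · exact hab
    · omega
    · exact le_rfl
  have := chainSum_le_pathLengthOn d γ (a := a) (b := b) (k := 1) hmono (by simp) (by simp)
  rw [chainSum] at this
  simpa using this

lemma pathLengthOn_le_of_lipOn {a b : ℝ} {K : ℝ} (hK : 0 ≤ K) (hab : a ≤ b)
    (h : ∀ s t : ℝ, a ≤ s → s ≤ t → t ≤ b → d (γ t) (γ s) ≤ K * (t - s)) :
    pathLengthOn d γ a b ≤ ENNReal.ofReal (K * (b - a)) := by
  refine pathLengthOn_le_of_chains _ _ fun k T hT h0 hk => ?_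
  have step : ∀ i ∈ Finset.range k,
      ENNReal.ofReal (d (γ (T (i + 1))) (γ (T i))) ≤ ENNReal.ofReal (K * (T (i + 1) - T i)) := by
    intro i hi
    rw [Finset.mem_range] at hi
    refine ENNReal.ofReal_le_ofReal (h _ _ ?_ ?_ ?_)
    · rw [← h0]; exact hT (Nat.zero_le i)
    · exact hT (Nat.le_succ i)
    · rw [← hk]; exact hT hi
  calc chainSum d γ k T ≤ ∑ i ∈ Finset.range k, ENNReal.ofReal (K * (T (i + 1) - T i)) :=
        Finset.sum_le_sum step
    _ = ENNReal.ofReal (∑ i ∈ Finset.range k, K * (T (i + 1) - T i)) :=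
        (ENNReal.ofReal_sum_of_nonneg fun i hi => by
          rw [Finset.mem_range] at hi
          exact mul_nonneg hK (sub_nonneg.2 (hT (Nat.le_succ i)))).symm
    _ = ENNReal.ofReal (K * (b - a)) := by
        rw [← Finset.mul_sum, Finset.sum_range_sub, h0, hk]

lemma pathLengthOn_self (h0' : ∀ z, d z z = 0) (a : ℝ) : pathLengthOn d γ a a = 0 := by
  refine le_antisymm (pathLengthOn_le_of_chains _ _ fun k T hT h0 hk => ?_) zero_le
  have hconst : ∀ i ≤ k, T i = a := fun i hi =>
    le_antisymm (hk ▸ hT hi) (h0 ▸ hT (Nat.zero_le i))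
  rw [chainSum]
  refine le_of_eq (Finset.sum_eq_zero fun i hi => ?_)
  rw [Finset.mem_range] at hi
  rw [hconst (i+1) hi, hconst i (le_of_lt hi), h0']
  exact ENNReal.ofReal_zero

lemma pathLengthOn_superadd {a b c : ℝ} (hab : a ≤ b) (hbc : b ≤ c) :
    pathLengthOn d γ a b + pathLengthOn d γ b c ≤ pathLengthOn d γ a c := by
  haveI := nonempty_pchain (a := a) (b := b) hab
  haveI := nonempty_pchain (a := b) (b := c) hbc
  rw [pathLengthOn_eq_iSup_chain d γ a b, pathLengthOn_eq_iSup_chain d γ b c,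
    ENNReal.iSup_add]
  refine iSup_le fun p => ?_
  rw [ENNReal.add_iSup]
  refine iSup_le fun q => ?_
  obtain ⟨⟨k, T⟩, hTm', hT0', hTk'⟩ := p
  obtain ⟨⟨m, U⟩, hUm', hU0', hUk'⟩ := q
  have hTm : Monotone T := hTm'
  have hT0 : T 0 = a := hT0'
  have hTk : T k = b := hTk'
  have hUm : Monotone U := hUm'
  have hU0 : U 0 = b := hU0'
  have hUk : U m = c := hUk'
  dsimp only
  set V : ℕ → ℝ := fun j => if j ≤ k then T j else U (j - k) with hVdef
  have hV1 : ∀ j ≤ k, V j = T j := fun j hj => by rw [hVdef]; simp [hj]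
  have hV2 : ∀ j, V (k + j) = U j := by
    intro j
    rcases Nat.eq_zero_or_pos j with hj | hj
    · subst hj; rw [hVdef]; simp [hTk, hU0.symm]
    · rw [hVdef]; dsimp only; rw [if_neg (by omega)]; congr 1; omega
  have hVm : Monotone V := by
    intro i j hij
    rcases le_or_gt j k with hj | hj
    · rw [hV1 i (le_trans hij hj), hV1 j hj]; exact hTm hij
    · rcases le_or_gt i k with hi | hi
      · rw [hV1 i hi]
        have : V j = U (j - k) := by rw [hVdef]; simp [Nat.not_le.2 hj]
        rw [this]
        calc T i ≤ T k := hTm hi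
          _ = U 0 := by rw [hTk, hU0]
          _ ≤ U (j - k) := hUm (Nat.zero_le _)
      · have hi' : V i = U (i - k) := by rw [hVdef]; simp [Nat.not_le.2 hi]
        have hj' : V j = U (j - k) := by rw [hVdef]; simp [Nat.not_le.2 hj]
        rw [hi', hj']
        exact hUm (by omega)
  have hV0 : V 0 = a := by rw [hV1 0 (Nat.zero_le k)]; exact hT0
  have hVl : V (k + m) = c := by rw [hV2 m]; exact hUk
  have hsplit : chainSum d γ (k + m) V = chainSum d γ k T + chainSum d γ m U := by
    rw [chainSum, Finset.sum_range_add, chainSum, chainSum]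
    congr 1
    · refine Finset.sum_congr rfl fun i hi => ?_
      rw [Finset.mem_range] at hi
      rw [hV1 (i+1) hi, hV1 i (le_of_lt hi)]
    · refine Finset.sum_congr rfl fun i hi => ?_
      rw [show k + i + 1 = k + (i + 1) by ring, hV2 (i+1), hV2 i]
  calc chainSum d γ k T + chainSum d γ m U = chainSum d γ (k + m) V := hsplit.symm
    _ ≤ pathLengthOn d γ a c := chainSum_le_pathLengthOn d γ hVm hV0 hVl

lemma pathLengthOn_subadd (htri : ∀ x y z, d x z ≤ d x y + d y z) (h0' : ∀ z, d z z = 0)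
    {a b c : ℝ} (hab : a ≤ b) (hbc : b ≤ c) :
    pathLengthOn d γ a c ≤ pathLengthOn d γ a b + pathLengthOn d γ b c := by
  refine pathLengthOn_le_of_chains _ _ fun k T hT h0 hk => ?_
  have key : ∀ i, ENNReal.ofReal (d (γ (T (i+1))) (γ (T i))) ≤
      ENNReal.ofReal (d (γ (min (T (i+1)) b)) (γ (min (T i) b))) +
      ENNReal.ofReal (d (γ (max (T (i+1)) b)) (γ (max (T i) b))) := by
    intro i
    have hTi : T i ≤ T (i + 1) := hT (Nat.le_succ i)
    rcases le_total (T (i+1)) b with h | h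
    · rw [min_eq_left h, min_eq_left (le_trans hTi h), max_eq_right h,
        max_eq_right (le_trans hTi h), h0']
      simp
    · rcases le_total b (T i) with h' | h'
      · rw [max_eq_left h, max_eq_left h', min_eq_right h, min_eq_right h', h0']
        simp
      · rw [min_eq_right h, min_eq_left h', max_eq_left h, max_eq_right h']
        calc ENNReal.ofReal (d (γ (T (i+1))) (γ (T i)))
            ≤ ENNReal.ofReal (d (γ (T (i+1))) (γ b) + d (γ b) (γ (T i))) :=
              ENNReal.ofReal_le_ofReal (htri _ _ _)
          _ ≤ ENNReal.ofReal (d (γ (T (i+1))) (γ b)) + ENNReal.ofReal (d (γ b) (γ (T i))) :=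
              ENNReal.ofReal_add_le
          _ = _ := by rw [add_comm]
  calc chainSum d γ k T
      ≤ ∑ i ∈ Finset.range k, (ENNReal.ofReal (d (γ (min (T (i+1)) b)) (γ (min (T i) b))) +
        ENNReal.ofReal (d (γ (max (T (i+1)) b)) (γ (max (T i) b)))) :=
        Finset.sum_le_sum fun i _ => key i
    _ = chainSum d γ k (fun j => min (T j) b) + chainSum d γ k (fun j => max (T j) b) := by
        rw [Finset.sum_add_distrib]; rfl
    _ ≤ pathLengthOn d γ a b + pathLengthOn d γ b c := by
        refine add_le_add ?_ ?_
        · exact chainSum_le_pathLengthOn d γ (hT.min monotone_const)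
            (by show min (T 0) b = a; rw [h0]; exact min_eq_left hab)
            (by show min (T k) b = b; rw [hk]; exact min_eq_right hbc)
        · exact chainSum_le_pathLengthOn d γ (hT.max monotone_const)
            (by show max (T 0) b = b; rw [h0]; exact max_eq_right hab)
            (by show max (T k) b = c; rw [hk]; exact max_eq_left hbc)

lemma pathLengthOn_add (htri : ∀ x y z, d x z ≤ d x y + d y z) (h0' : ∀ z, d z z = 0)
    {a b c : ℝ} (hab : a ≤ b) (hbc : b ≤ c) :
    pathLengthOn d γ a c = pathLengthOn d γ a b + pathLengthOn d γ b c :=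
  le_antisymm (pathLengthOn_subadd d γ htri h0' hab hbc) (pathLengthOn_superadd d γ hab hbc)

lemma pathLengthOn_mono (htri : ∀ x y z, d x z ≤ d x y + d y z) (h0' : ∀ z, d z z = 0)
    {a b c : ℝ} (hab : a ≤ b) (hbc : b ≤ c) :
    pathLengthOn d γ a b ≤ pathLengthOn d γ a c := by
  rw [pathLengthOn_add d γ htri h0' hab hbc]; exact le_self_add

lemma pathLength_affine (h0' : ∀ z, d z z = 0) {a b : ℝ} (hab : a ≤ b) :
    pathLength d (fun u => γ (a + u * (b - a))) = pathLengthOn d γ a b := by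
  refine le_antisymm ?_ ?_
  · refine pathLengthOn_le_of_chains _ _ fun k T hT h0 hk => ?_
    have : chainSum d (fun u => γ (a + u * (b - a))) k T
        = chainSum d γ k (fun j => a + T j * (b - a)) := rfl
    rw [this]
    refine chainSum_le_pathLengthOn d γ ?_ ?_ ?_
    · intro i j hij
      exact add_le_add_right (mul_le_mul_of_nonneg_right (hT hij) (sub_nonneg.2 hab)) a
    · rw [h0]; ring
    · rw [hk]; ring
  · rcases eq_or_lt_of_le hab with heq | hlt
    · subst heq
      rw [pathLengthOn_self d γ h0']
      exact zero_le
    · refine pathLengthOn_le_of_chains _ _ fun k U hU h0 hk => ?_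
      set T : ℕ → ℝ := fun j => (U j - a) / (b - a) with hTdef
      have hba : (0:ℝ) < b - a := sub_pos.2 hlt
      have harg : ∀ j, a + T j * (b - a) = U j := by
        intro j; rw [hTdef]; field_simp; ring
      have : chainSum d γ k U = chainSum d (fun u => γ (a + u * (b - a))) k T := by
        rw [chainSum, chainSum]
        refine Finset.sum_congr rfl fun i _ => ?_
        rw [harg, harg]
      rw [this]
      refine chainSum_le_pathLengthOn _ _ ?_ ?_ ?_
      · intro i j hij
        exact div_le_div_of_nonneg_right (sub_le_sub_right (hU hij) a) hba.le
      · rw [hTdef]; simp [h0]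
      · rw [hTdef]; dsimp only; rw [hk]; field_simp

variable {d γ}

lemma pathLengthOn_congr {E₂ : Type*} {d₂ : E₂ → E₂ → ℝ} {γ₂ : ℝ → E₂}
    (h : ∀ s t : ℝ, d₂ (γ₂ s) (γ₂ t) = d (γ s) (γ t)) (a b : ℝ) :
    pathLengthOn d₂ γ₂ a b = pathLengthOn d γ a b := by
  simp only [pathLengthOn, h]

/- ### facts about IsDistance -/

lemma isd_refl0 (hd : IsDistance d) (z : E) : d z z = 0 := (hd.2.2 z z).2 rfl

lemma isd_nonneg (hd : IsDistance d) (x y : E) : 0 ≤ d x y := by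
  have h := hd.2.1 x x y -- d x y ≤ d x x + d x y? no
  have h2 := hd.2.1 x y x
  rw [isd_refl0 hd, hd.1 y x] at h2
  linarith

lemma isd_eq_of (hd : IsDistance d) {x y : E} (h : d x y ≤ 0) : x = y :=
  (hd.2.2 x y).1 (le_antisymm h (isd_nonneg hd x y))

/- ### the arclength function -/

lemma lipCurve_bound (hγ : LipCurve d γ) :
    ∃ K : ℝ, 0 ≤ K ∧ ∀ s t : ℝ, 0 ≤ s → s ≤ t → t ≤ 1 → d (γ t) (γ s) ≤ K * (t - s) := by
  obtain ⟨K, hK⟩ := hγ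
  refine ⟨max K 0, le_max_right _ _, fun s t hs hst ht => ?_⟩
  have := hK t ⟨le_trans hs hst, ht⟩ s ⟨hs, le_trans hst ht⟩
  calc d (γ t) (γ s) ≤ K * |t - s| := this
    _ ≤ max K 0 * |t - s| := mul_le_mul_of_nonneg_right (le_max_left _ _) (abs_nonneg _)
    _ = max K 0 * (t - s) := by rw [abs_of_nonneg (by linarith)]

lemma pathLength_ne_top (hd : IsDistance d) (hγ : LipCurve d γ) : pathLength d γ ≠ ⊤ := by
  obtain ⟨K, hK0, hK⟩ := lipCurve_bound hγ
  have := pathLengthOn_le_of_lipOn d γ hK0 (by norm_num) hK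
  rw [pathLength]
  exact ne_top_of_le_ne_top ENNReal.ofReal_ne_top this

lemma pathLengthOn_ne_top (hd : IsDistance d) (hγ : LipCurve d γ) {t : ℝ}
    (h0 : 0 ≤ t) (h1 : t ≤ 1) : pathLengthOn d γ 0 t ≠ ⊤ :=
  ne_top_of_le_ne_top (pathLength_ne_top hd hγ)
    (pathLengthOn_mono d γ hd.2.1 (isd_refl0 hd) h0 h1)

lemma d_le_toReal (hd : IsDistance d) (hγ : LipCurve d γ) {a b : ℝ}
    (h0 : 0 ≤ a) (hab : a ≤ b) (h1 : b ≤ 1) :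
    d (γ b) (γ a) ≤ (pathLengthOn d γ a b).toReal := by
  have hfin : pathLengthOn d γ a b ≠ ⊤ := by
    refine ne_top_of_le_ne_top (pathLengthOn_ne_top hd hγ (le_trans h0 hab) h1) ?_
    have := pathLengthOn_add d γ hd.2.1 (isd_refl0 hd) h0 hab (c := b)
    rw [this]; exact le_add_self
  exact (ENNReal.ofReal_le_iff_le_toReal hfin).1 (ofReal_le_pathLengthOn d γ hab)

/-- The normalized arclength function. -/
noncomputable def arcS (d : E → E → ℝ) (γ : ℝ → E) : ℝ → ℝ :=
  fun t => (pathLengthOn d γ 0 t).toReal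

lemma arcS_zero (hd : IsDistance d) : arcS d γ 0 = 0 := by
  rw [arcS, pathLengthOn_self d γ (isd_refl0 hd)]; rfl

lemma arcS_diff (hd : IsDistance d) (hγ : LipCurve d γ) {t t' : ℝ}
    (h0 : 0 ≤ t) (ht : t ≤ t') (h1 : t' ≤ 1) :
    arcS d γ t' - arcS d γ t = (pathLengthOn d γ t t').toReal := by
  have hadd := pathLengthOn_add d γ hd.2.1 (isd_refl0 hd) h0 ht
  have h1' : pathLengthOn d γ 0 t ≠ ⊤ := pathLengthOn_ne_top hd hγ h0 (le_trans ht h1)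
  have h2' : pathLengthOn d γ t t' ≠ ⊤ := by
    refine ne_top_of_le_ne_top (pathLengthOn_ne_top hd hγ (le_trans h0 ht) h1) ?_
    rw [hadd]; exact le_add_self
  rw [arcS, arcS, hadd, ENNReal.toReal_add h1' h2']
  ring

lemma arcS_mono (hd : IsDistance d) (hγ : LipCurve d γ) {t t' : ℝ}
    (h0 : 0 ≤ t) (ht : t ≤ t') (h1 : t' ≤ 1) : arcS d γ t ≤ arcS d γ t' := by
  have := arcS_diff hd hγ h0 ht h1
  have h2 : (0:ℝ) ≤ (pathLengthOn d γ t t').toReal := ENNReal.toReal_nonneg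
  linarith

lemma arcS_bound (hd : IsDistance d) (hγ : LipCurve d γ) :
    ∃ K : ℝ, 0 ≤ K ∧ ∀ t t' : ℝ, 0 ≤ t → t ≤ t' → t' ≤ 1 →
      arcS d γ t' - arcS d γ t ≤ K * (t' - t) := by
  obtain ⟨K, hK0, hK⟩ := lipCurve_bound hγ
  refine ⟨K, hK0, fun t t' h0 ht h1 => ?_⟩
  rw [arcS_diff hd hγ h0 ht h1]
  have hle := pathLengthOn_le_of_lipOn d γ hK0 ht
    (fun s u hs hsu hu => hK s u (le_trans h0 hs) hsu (le_trans hu h1))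
  calc (pathLengthOn d γ t t').toReal ≤ (ENNReal.ofReal (K * (t' - t))).toReal :=
        ENNReal.toReal_mono ENNReal.ofReal_ne_top hle
    _ = K * (t' - t) := ENNReal.toReal_ofReal (mul_nonneg hK0 (by linarith))

lemma arcS_continuousOn (hd : IsDistance d) (hγ : LipCurve d γ) :
    ContinuousOn (arcS d γ) (Icc 0 1) := by
  obtain ⟨K, hK0, hK⟩ := arcS_bound hd hγ
  have : LipschitzOnWith (Real.toNNReal K) (arcS d γ) (Icc 0 1) := by
    rw [lipschitzOnWith_iff_dist_le_mul]
    intro x hx y hy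
    rw [Real.dist_eq, Real.dist_eq, Real.coe_toNNReal _ hK0]
    rcases le_total x y with h | h
    · rw [abs_of_nonpos (by have := arcS_mono hd hγ hx.1 h hy.2; linarith),
        abs_of_nonpos (by linarith)]
      have := hK x y hx.1 h hy.2
      linarith
    · rw [abs_of_nonneg (by have := arcS_mono hd hγ hy.1 h hx.2; linarith),
        abs_of_nonneg (by linarith)]
      have := hK y x hy.1 h hx.2
      linarith
  exact this.continuousOn

lemma eq_of_zero_sublength (hd : IsDistance d) (hγ : LipCurve d γ) {a b : ℝ}
    (h0 : 0 ≤ a) (hab : a ≤ b) (h1 : b ≤ 1)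
    (hz : (pathLengthOn d γ a b).toReal = 0) : γ b = γ a := by
  have h := d_le_toReal hd hγ h0 hab h1
  rw [hz] at h
  exact isd_eq_of hd h

/- ### constant speed reparametrization -/

theorem exists_constSpeed (hd : IsDistance d) (hγ : LipCurve d γ) :
    ∃ γ' : ℝ → E, γ' 0 = γ 0 ∧ γ' 1 = γ 1 ∧
      (∀ u : ℝ, ∃ t ∈ Icc (0:ℝ) 1, γ' u = γ t) ∧
      (∀ u v : ℝ, u ∈ Icc (0:ℝ) 1 → v ∈ Icc (0:ℝ) 1 →
        d (γ' u) (γ' v) ≤ (pathLength d γ).toReal * |u - v|) ∧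
      pathLength d γ' ≤ pathLength d γ := by
  set ℓ : ℝ := (pathLength d γ).toReal with hℓdef
  have hℓ0 : 0 ≤ ℓ := ENNReal.toReal_nonneg
  have hfin : pathLength d γ ≠ ⊤ := pathLength_ne_top hd hγ
  have hS1 : arcS d γ 1 = ℓ := rfl
  rcases eq_or_lt_of_le hℓ0 with hzero | hpos
  · -- zero length : constant curve
    have hz : (pathLengthOn d γ 0 1).toReal = 0 := by
      rw [show (pathLengthOn d γ 0 1).toReal = arcS d γ 1 from rfl, hS1, ← hzero]
    have h01 : γ 1 = γ 0 :=
      eq_of_zero_sublength hd hγ le_rfl zero_le_one le_rfl hz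
    refine ⟨fun _ => γ 0, rfl, h01.symm, fun u => ⟨0, ⟨le_rfl, by norm_num⟩, rfl⟩, ?_, ?_⟩
    · intro u v _ _
      show d (γ 0) (γ 0) ≤ ℓ * |u - v|
      rw [isd_refl0 hd]
      positivity
    · rw [pathLength]
      have := pathLengthOn_le_of_lipOn d (fun _ => γ 0) (a := 0) (b := 1) (K := 0) le_rfl
        zero_le_one (fun s t _ _ _ => by rw [isd_refl0 hd]; simp)
      have h0le : pathLengthOn d (fun _ => γ 0) 0 1 ≤ 0 := by simpa using this
      exact le_trans h0le zero_le
  · -- positive length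
    set c : ℝ → ℝ := fun u => max 0 (min 1 u) with hcdef
    have hc_mem : ∀ u, c u ∈ Icc (0:ℝ) 1 := fun u =>
      ⟨le_max_left _ _, max_le (by norm_num) (min_le_left _ _)⟩
    have hc_id : ∀ u ∈ Icc (0:ℝ) 1, c u = u := fun u hu => by
      rw [hcdef]; dsimp only; rw [min_eq_right hu.2, max_eq_right hu.1]
    set Su : ℝ → Set ℝ := fun u => {t | t ∈ Icc (0:ℝ) 1 ∧ arcS d γ t = u * ℓ} with hSudef
    have hSclosed : ∀ u, IsClosed (Su u) := by
      intro u
      have : Su u = Icc (0:ℝ) 1 ∩ (arcS d γ) ⁻¹' {u * ℓ} := by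
        ext t; simp [hSudef, and_comm]
      rw [this]  -- ?
      exact (arcS_continuousOn hd hγ).preimage_isClosed_of_isClosed isClosed_Icc
        isClosed_singleton
    have hSne : ∀ u ∈ Icc (0:ℝ) 1, (Su u).Nonempty := by
      intro u hu
      have hsub := intermediate_value_Icc (by norm_num : (0:ℝ) ≤ 1) (arcS_continuousOn hd hγ)
      have : u * ℓ ∈ Icc (arcS d γ 0) (arcS d γ 1) := by
        rw [arcS_zero hd, hS1]
        exact ⟨mul_nonneg hu.1 hℓ0, by nlinarith [hu.2]⟩
      obtain ⟨t, ht, hSt⟩ := hsub this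
      exact ⟨t, ht, hSt⟩
    set τ : ℝ → ℝ := fun u => sInf (Su u) with hτdef
    have hτ_mem : ∀ u ∈ Icc (0:ℝ) 1, τ u ∈ Su u := by
      intro u hu
      exact (hSclosed u).csInf_mem (hSne u hu) (BddBelow.mono (fun t ht => ht.1)
        bddBelow_Icc)
    have hτ_mono : ∀ u v, u ∈ Icc (0:ℝ) 1 → v ∈ Icc (0:ℝ) 1 → u ≤ v → τ u ≤ τ v := by
      intro u v hu hv huv
      obtain ⟨hvI, hvS⟩ := hτ_mem v hv
      have hsub := intermediate_value_Icc hvI.1 ((arcS_continuousOn hd hγ).mono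
        (Icc_subset_Icc le_rfl hvI.2))
      have : u * ℓ ∈ Icc (arcS d γ 0) (arcS d γ (τ v)) := by
        rw [arcS_zero hd, hvS]
        exact ⟨mul_nonneg hu.1 hℓ0, mul_le_mul_of_nonneg_right huv hℓ0⟩
      obtain ⟨t, ht, hSt⟩ := hsub this
      refine le_trans (csInf_le (BddBelow.mono (fun s hs => hs.1) bddBelow_Icc) ?_) ht.2
      exact ⟨⟨ht.1, le_trans ht.2 hvI.2⟩, hSt⟩
    set γ' : ℝ → E := fun u => γ (τ (c u)) with hγ'def
    have key : ∀ u v, u ∈ Icc (0:ℝ) 1 → v ∈ Icc (0:ℝ) 1 → u ≤ v →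
        d (γ (τ v)) (γ (τ u)) ≤ ℓ * (v - u) := by
      intro u v hu hv huv
      obtain ⟨huI, huS⟩ := hτ_mem u hu
      obtain ⟨hvI, hvS⟩ := hτ_mem v hv
      have hττ : τ u ≤ τ v := hτ_mono u v hu hv huv
      have hdle := d_le_toReal hd hγ huI.1 hττ hvI.2
      have hdiff := arcS_diff hd hγ huI.1 hττ hvI.2
      rw [huS, hvS] at hdiff
      calc d (γ (τ v)) (γ (τ u)) ≤ (pathLengthOn d γ (τ u) (τ v)).toReal := hdle
        _ = v * ℓ - u * ℓ := hdiff.symm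
        _ = ℓ * (v - u) := by ring
    refine ⟨γ', ?_, ?_, ?_, ?_, ?_⟩
    · -- γ' 0 = γ 0
      have h0I : (0:ℝ) ∈ Icc (0:ℝ) 1 := ⟨le_rfl, by norm_num⟩
      obtain ⟨hI, hS⟩ := hτ_mem 0 h0I
      rw [hγ'def]; dsimp only
      rw [hc_id 0 h0I]
      refine eq_of_zero_sublength hd hγ le_rfl hI.1 hI.2 ?_
      have := arcS_diff hd hγ le_rfl hI.1 hI.2
      rw [hS, arcS_zero hd] at this
      simp at this ⊢
      linarith
    · -- γ' 1 = γ 1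
      have h1I : (1:ℝ) ∈ Icc (0:ℝ) 1 := ⟨by norm_num, le_rfl⟩
      obtain ⟨hI, hS⟩ := hτ_mem 1 h1I
      rw [hγ'def]; dsimp only
      rw [hc_id 1 h1I]
      have hz : (pathLengthOn d γ (τ 1) 1).toReal = 0 := by
        have hdiff := arcS_diff hd hγ hI.1 hI.2 le_rfl
        rw [hS] at hdiff
        rw [← hdiff, hS1]
        ring
      exact (eq_of_zero_sublength hd hγ hI.1 hI.2 le_rfl hz).symm
    · exact fun u => ⟨τ (c u), (hτ_mem (c u) (hc_mem u)).1, rfl⟩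
    · intro u v hu hv
      rw [hγ'def]; dsimp only
      rw [hc_id u hu, hc_id v hv]
      rcases le_total u v with h | h
      · rw [hd.1, abs_of_nonpos (by linarith)]
        have := key u v hu hv h
        calc d (γ (τ v)) (γ (τ u)) ≤ ℓ * (v - u) := this
          _ = ℓ * -(u - v) := by ring
      · rw [abs_of_nonneg (by linarith)]
        exact key v u hv hu h
    · rw [pathLength]
      have hlip : ∀ s t : ℝ, 0 ≤ s → s ≤ t → t ≤ 1 → d (γ' t) (γ' s) ≤ ℓ * (t - s) := by
        intro s t hs hst ht
        rw [hγ'def]; dsimp only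
        rw [hc_id s ⟨hs, le_trans hst ht⟩, hc_id t ⟨le_trans hs hst, ht⟩]
        exact key s t ⟨hs, le_trans hst ht⟩ ⟨le_trans hs hst, ht⟩ hst
      have := pathLengthOn_le_of_lipOn d γ' hℓ0 (by norm_num) hlip
      calc pathLengthOn d γ' 0 1 ≤ ENNReal.ofReal (ℓ * (1 - 0)) := this
        _ = ENNReal.ofReal ℓ := by norm_num
        _ = pathLength d γ := by rw [hℓdef, ENNReal.ofReal_toReal hfin]

/- ### the ambient-space part -/

variable {X : Type*} [MetricSpace X] {Ω : Set X}

/- ### reachable sets -/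

variable {X : Type*} [MetricSpace X] {Ω : Set X}

/-- Points of `X` reachable from `x` by a Lipschitz curve in `Ω` of `d`-length at most `r`. -/
def reach (d : Ω → Ω → ℝ) (x : Ω) (r : ℝ) : Set X :=
  {z | ∃ w : Ω, (w : X) = z ∧ ∃ γ : ℝ → Ω, LipCurve d γ ∧ γ 0 = x ∧ γ 1 = w ∧
    pathLength d γ ≤ ENNReal.ofReal r}

lemma reach_mono (d : Ω → Ω → ℝ) (x : Ω) {r r' : ℝ} (h : r ≤ r') :
    reach d x r ⊆ reach d x r' := by
  rintro z ⟨w, rfl, γ, hγ, h0, h1, hlen⟩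
  exact ⟨w, rfl, γ, hγ, h0, h1, le_trans hlen (ENNReal.ofReal_le_ofReal h)⟩

lemma reach_subset_singleton {d : Ω → Ω → ℝ} (hd : IsDistance d) (x : Ω) {r : ℝ} (hr : r ≤ 0) :
    reach d x r ⊆ {(x : X)} := by
  rintro z ⟨w, rfl, γ, hγ, h0, h1, hlen⟩
  have hzero : pathLength d γ = 0 := le_antisymm
    (le_trans hlen (by simp [ENNReal.ofReal_eq_zero.2 hr])) zero_le
  have hd10 : d (γ 1) (γ 0) ≤ 0 := by
    have := d_le_toReal hd hγ le_rfl zero_le_one le_rfl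
    rw [show pathLengthOn d γ 0 1 = pathLength d γ from rfl, hzero] at this
    simpa using this
  have : γ 1 = γ 0 := isd_eq_of hd hd10
  rw [← h1, this, h0]
  exact mem_singleton _

lemma reach_subset_coe (d : Ω → Ω → ℝ) (x : Ω) (r : ℝ) :
    reach d x r ⊆ Ω := by
  rintro z ⟨w, rfl, _⟩
  exact w.2

/-- Truncation: any point reachable with budget `r` is within `α (r - r')` of a point
reachable with budget `r'`. -/
lemma reach_trunc {α : ℝ} (hα : 1 < α) {d : Ω → Ω → ℝ} (hd : IsDistance d)
    (hb : ∀ x y : Ω, α⁻¹ * dist (x : X) (y : X) ≤ d x y)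
    (x : Ω) {r r' : ℝ} (h0 : 0 ≤ r') (hrr : r' ≤ r) {z : X} (hz : z ∈ reach d x r) :
    ∃ z' ∈ reach d x r', dist z z' ≤ α * (r - r') := by
  have hα0 : (0:ℝ) < α := lt_trans one_pos hα
  have hDd : ∀ u v : Ω, dist (u : X) (v : X) ≤ α * d u v := by
    intro u v
    have := hb u v
    calc dist (u : X) (v : X) = α * (α⁻¹ * dist (u : X) (v : X)) := by
          field_simp
      _ ≤ α * d u v := by nlinarith [this]
  obtain ⟨w, rfl, γ, hγ, hγ0, hγ1, hlen⟩ := hz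
  by_cases hc : pathLength d γ ≤ ENNReal.ofReal r'
  · exact ⟨w, ⟨w, rfl, γ, hγ, hγ0, hγ1, hc⟩, by
      rw [dist_self]; exact mul_nonneg hα0.le (sub_nonneg.2 hrr)⟩
  · have hfin : pathLength d γ ≠ ⊤ := pathLength_ne_top hd hγ
    set ℓ : ℝ := (pathLength d γ).toReal with hℓdef
    have hℓr : ℓ ≤ r := by
      have := ENNReal.toReal_mono ENNReal.ofReal_ne_top hlen
      rwa [ENNReal.toReal_ofReal (le_trans h0 hrr)] at this
    have hr'ℓ : r' < ℓ := by
      rcases lt_or_ge r' ℓ with h | h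
      · exact h
      · exfalso
        refine hc ?_
        calc pathLength d γ = ENNReal.ofReal ℓ := (ENNReal.ofReal_toReal hfin).symm
          _ ≤ ENNReal.ofReal r' := ENNReal.ofReal_le_ofReal h
    -- find the truncation time
    have hS1 : arcS d γ 1 = ℓ := rfl
    have hmem : r' ∈ Icc (arcS d γ 0) (arcS d γ 1) := by
      rw [arcS_zero hd, hS1]; exact ⟨h0, hr'ℓ.le⟩
    obtain ⟨t', ht'I, ht'S⟩ := intermediate_value_Icc zero_le_one (arcS_continuousOn hd hγ) hmem
    -- the restricted curve
    set σ : ℝ → Ω := fun u => γ (t' * u) with hσdef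
    have hσlip : LipCurve d σ := by
      obtain ⟨K, hK⟩ := hγ
      refine ⟨max K 0, fun s hs t ht => ?_⟩
      have hts : t' * s ∈ Icc (0:ℝ) 1 :=
        ⟨mul_nonneg ht'I.1 hs.1, le_trans (mul_le_mul ht'I.2 hs.2 hs.1 zero_le_one) (by norm_num)⟩
      have htt : t' * t ∈ Icc (0:ℝ) 1 :=
        ⟨mul_nonneg ht'I.1 ht.1, le_trans (mul_le_mul ht'I.2 ht.2 ht.1 zero_le_one) (by norm_num)⟩
      calc d (σ s) (σ t) ≤ K * |t' * s - t' * t| := hK _ hts _ htt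
        _ ≤ max K 0 * |t' * s - t' * t| :=
            mul_le_mul_of_nonneg_right (le_max_left _ _) (abs_nonneg _)
        _ = max K 0 * (t' * |s - t|) := by
            rw [← mul_sub, abs_mul, abs_of_nonneg ht'I.1]
        _ ≤ max K 0 * |s - t| := by
            refine mul_le_mul_of_nonneg_left ?_ (le_max_right _ _)
            calc t' * |s - t| ≤ 1 * |s - t| :=
                  mul_le_mul_of_nonneg_right ht'I.2 (abs_nonneg _)
              _ = |s - t| := one_mul _
    have hσlen : pathLength d σ = pathLengthOn d γ 0 t' := by
      have : σ = fun u => γ (0 + u * (t' - 0)) := by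
        funext u; rw [hσdef]; congr 1; ring
      rw [this]
      exact pathLength_affine d γ (isd_refl0 hd) ht'I.1
    have hσ0 : σ 0 = x := by rw [hσdef]; show γ (t' * 0) = x; rw [mul_zero, hγ0]
    have hσ1 : σ 1 = γ t' := by rw [hσdef]; show γ (t' * 1) = γ t'; rw [mul_one]
    have hσle : pathLength d σ ≤ ENNReal.ofReal r' := by
      rw [hσlen]
      have hPfin : pathLengthOn d γ 0 t' ≠ ⊤ := pathLengthOn_ne_top hd hγ ht'I.1 ht'I.2
      have : (pathLengthOn d γ 0 t').toReal = r' := ht'S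
      rw [← ENNReal.ofReal_toReal hPfin, this]
    refine ⟨(γ t' : X), ⟨γ t', rfl, σ, hσlip, hσ0, hσ1, hσle⟩, ?_⟩
    have hdd : d (γ 1) (γ t') ≤ ℓ - r' := by
      have h1 := d_le_toReal hd hγ ht'I.1 ht'I.2 le_rfl
      have h2 := arcS_diff hd hγ ht'I.1 ht'I.2 le_rfl
      rw [hS1, ht'S] at h2
      rw [← h2] at h1
      exact h1
    calc dist (w : X) (γ t' : X) = dist (γ 1 : X) (γ t' : X) := by rw [hγ1]
      _ ≤ α * d (γ 1) (γ t') := hDd _ _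
      _ ≤ α * (ℓ - r') := by nlinarith
      _ ≤ α * (r - r') := by nlinarith

/-- Total boundedness of reachable sets: continuous induction on the budget. -/
theorem reach_totallyBounded [CompleteSpace X] [LocallyCompactSpace X]
    {α : ℝ} (hα : 1 < α) {d : Ω → Ω → ℝ} (hd : IsDistance d)
    (hb : ∀ x y : Ω, α⁻¹ * dist (x : X) (y : X) ≤ d x y)
    (x : Ω) (r : ℝ) : TotallyBounded (reach d x r) := by
  have hα0 : (0:ℝ) < α := lt_trans one_pos hα
  by_contra hbad0
  set B : Set ℝ := {r | 0 ≤ r ∧ ¬ TotallyBounded (reach d x r)} with hBdef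
  have hBne : B.Nonempty := by
    refine ⟨max r 0, le_max_right _ _, fun h => hbad0 ?_⟩
    exact h.subset (reach_mono d x (le_max_left _ _))
  have hBbdd : BddBelow B := ⟨0, fun b hb' => hb'.1⟩
  set ρ := sInf B with hρdef
  have hρ0 : 0 ≤ ρ := le_csInf hBne fun b hb' => hb'.1
  have htb_lt : ∀ r', 0 ≤ r' → r' < ρ → TotallyBounded (reach d x r') := by
    intro r' h0 hlt
    by_contra hc
    exact absurd (csInf_le hBbdd ⟨h0, hc⟩) (not_le.2 hlt)
  have hbase : TotallyBounded (reach d x 0) :=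
    TotallyBounded.subset (reach_subset_singleton hd x le_rfl)
      (Set.Finite.totallyBounded (finite_singleton _))
  have htbρ : TotallyBounded (reach d x ρ) := by
    rcases eq_or_lt_of_le hρ0 with h0 | hpos
    · rw [← h0]; exact hbase
    · rw [Metric.totallyBounded_iff]
      intro ε hε
      set r' := max 0 (ρ - ε / (2 * α)) with hr'def
      have h2 : 0 ≤ r' := le_max_left _ _
      have h1 : r' < ρ := by
        rw [hr'def]
        rcases max_cases 0 (ρ - ε / (2 * α)) with ⟨h, _⟩ | ⟨h, _⟩ <;> rw [h]
        · exact hpos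
        · have : 0 < ε / (2 * α) := by positivity
          linarith
      have h3 : α * (ρ - r') ≤ ε / 2 := by
        have : ρ - r' ≤ ε / (2 * α) := by
          rw [hr'def]
          have := le_max_right 0 (ρ - ε / (2 * α))
          linarith
        calc α * (ρ - r') ≤ α * (ε / (2 * α)) := by nlinarith
          _ = ε / 2 := by field_simp
      have htb' := htb_lt r' h2 h1
      rw [Metric.totallyBounded_iff] at htb'
      obtain ⟨t, htf, htcov⟩ := htb' (ε / 2) (by positivity)
      refine ⟨t, htf, fun z hz => ?_⟩
      obtain ⟨z', hz', hdist⟩ := reach_trunc hα hd hb x h2 h1.le hz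
      have hz'mem := htcov hz'
      rw [mem_iUnion₂] at hz'mem
      obtain ⟨y, hy, hz'y⟩ := hz'mem
      rw [mem_iUnion₂]
      refine ⟨y, hy, ?_⟩
      rw [Metric.mem_ball] at hz'y ⊢
      calc dist z y ≤ dist z z' + dist z' y := dist_triangle _ _ _
        _ < ε / 2 + ε / 2 := by
            have : dist z z' ≤ ε / 2 := le_trans hdist h3
            linarith
        _ = ε := by ring
  have hcomp : IsCompact (closure (reach d x ρ)) :=
    TotallyBounded.isCompact_of_isClosed htbρ.closure isClosed_closure
  obtain ⟨K', hK'comp, hK'sub⟩ := exists_compact_superset hcomp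
  obtain ⟨δ, hδ0, hthick⟩ := hcomp.exists_thickening_subset_open isOpen_interior hK'sub
  have hstep : TotallyBounded (reach d x (ρ + δ / (2 * α))) := by
    refine TotallyBounded.subset ?_ hK'comp.totallyBounded
    intro z hz
    have hge : ρ ≤ ρ + δ / (2 * α) := by
      have : 0 < δ / (2 * α) := by positivity
      linarith
    obtain ⟨z', hz', hdist⟩ := reach_trunc hα hd hb x hρ0 hge hz
    have hmem : z ∈ Metric.thickening δ (closure (reach d x ρ)) := by
      rw [Metric.mem_thickening_iff]
      refine ⟨z', subset_closure hz', ?_⟩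
      have : α * (ρ + δ / (2 * α) - ρ) = δ / 2 := by field_simp; ring
      rw [this] at hdist
      calc dist z z' ≤ δ / 2 := hdist
        _ < δ := by linarith
    exact interior_subset (hthick hmem)
  have hlb : ∀ b ∈ B, ρ + δ / (2 * α) ≤ b := by
    intro b hb'
    by_contra hc
    push_neg at hc
    exact hb'.2 (TotallyBounded.subset (reach_mono d x hc.le) hstep)
  have := le_csInf hBne hlb
  have hpos : 0 < δ / (2 * α) := by positivity
  rw [← hρdef] at this
  linarith

/-- The inclusion of `Ω` into its closure. -/
def incl (Ω : Set X) (a : Ω) : closure Ω := ⟨a.1, subset_closure a.2⟩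

lemma denseRange_incl : DenseRange (incl Ω) := by
  intro p
  obtain ⟨u, hu, hconv⟩ := mem_closure_iff_seq_limit.1 p.2
  refine mem_closure_iff_seq_limit.2 ⟨fun n => incl Ω ⟨u n, hu n⟩, fun n => ⟨_, rfl⟩, ?_⟩
  exact tendsto_subtype_rng.2 hconv

lemma closure_prop2 (P : closure Ω → closure Ω → Prop)
    (hP : IsClosed {q : closure Ω × closure Ω | P q.1 q.2})
    (h : ∀ a b : Ω, P (incl Ω a) (incl Ω b)) :
    ∀ p q : closure Ω, P p q := by
  intro p q
  have hd2 : DenseRange (Prod.map (incl Ω) (incl Ω)) :=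
    DenseRange.prodMap denseRange_incl denseRange_incl
  have hsub : range (Prod.map (incl Ω) (incl Ω)) ⊆ {q : closure Ω × closure Ω | P q.1 q.2} := by
    rintro ⟨p', q'⟩ ⟨⟨a, b⟩, heq⟩
    have h1 : incl Ω a = p' := congrArg Prod.fst heq
    have h2 : incl Ω b = q' := congrArg Prod.snd heq
    rw [← h1, ← h2]
    exact h a b
  have : (p, q) ∈ closure (range (Prod.map (incl Ω) (incl Ω))) := by
    rw [hd2.closure_range]; trivial
  exact (closure_minimal hsub hP) this

lemma closure_prop3 (P : closure Ω → closure Ω → closure Ω → Prop)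
    (hP : IsClosed {q : closure Ω × closure Ω × closure Ω | P q.1 q.2.1 q.2.2})
    (h : ∀ a b c : Ω, P (incl Ω a) (incl Ω b) (incl Ω c)) :
    ∀ p q r : closure Ω, P p q r := by
  intro p q r
  have hd3 : DenseRange (Prod.map (incl Ω) (Prod.map (incl Ω) (incl Ω))) :=
    DenseRange.prodMap denseRange_incl (DenseRange.prodMap denseRange_incl denseRange_incl)
  have hsub : range (Prod.map (incl Ω) (Prod.map (incl Ω) (incl Ω))) ⊆
      {q : closure Ω × closure Ω × closure Ω | P q.1 q.2.1 q.2.2} := by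
    rintro ⟨p', q', r'⟩ ⟨⟨a, b, c⟩, heq⟩
    have h1 : incl Ω a = p' := congrArg Prod.fst heq
    have h2 : incl Ω b = q' := congrArg (fun z => z.2.1) heq
    have h3 : incl Ω c = r' := congrArg (fun z => z.2.2) heq
    rw [← h1, ← h2, ← h3]
    exact h a b c
  have : (p, q, r) ∈ closure (range (Prod.map (incl Ω) (Prod.map (incl Ω) (incl Ω)))) := by
    rw [hd3.closure_range]; trivial
  exact (closure_minimal hsub hP) this

section ExtFacts

variable {α : ℝ} {dd : Ω → Ω → ℝ} {ee : closure Ω → closure Ω → ℝ}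

lemma ext_incl (hee : IsContExt Ω dd ee) (a b : Ω) :
    ee (incl Ω a) (incl Ω b) = dd a b := hee.2 a b

lemma ext_le (hα : 0 < α) (hdd : MemD α Ω dd) (hee : IsContExt Ω dd ee) :
    ∀ p q : closure Ω, ee p q ≤ α * dist (p : X) (q : X) := by
  refine closure_prop2 _ ?_ ?_
  · refine isClosed_le (hee.1) ?_
    exact (continuous_const.mul ((continuous_subtype_val.comp continuous_fst).dist
      (continuous_subtype_val.comp continuous_snd)))
  · intro a b
    rw [ext_incl hee a b]
    exact (hdd.2.2 a b).2

lemma ext_ge (hα : 0 < α) (hdd : MemD α Ω dd) (hee : IsContExt Ω dd ee) :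
    ∀ p q : closure Ω, α⁻¹ * dist (p : X) (q : X) ≤ ee p q := by
  refine closure_prop2 _ ?_ ?_
  · refine isClosed_le ?_ (hee.1)
    exact (continuous_const.mul ((continuous_subtype_val.comp continuous_fst).dist
      (continuous_subtype_val.comp continuous_snd)))
  · intro a b
    rw [ext_incl hee a b]
    exact (hdd.2.2 a b).1

lemma ext_nonneg (hα : 0 < α) (hdd : MemD α Ω dd) (hee : IsContExt Ω dd ee)
    (p q : closure Ω) : 0 ≤ ee p q :=
  le_trans (by positivity) (ext_ge hα hdd hee p q)

lemma ext_symm (hdd : MemD α Ω dd) (hee : IsContExt Ω dd ee) :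
    ∀ p q : closure Ω, ee p q = ee q p := by
  refine closure_prop2 _ ?_ ?_
  · refine isClosed_eq (hee.1) ?_
    exact hee.1.comp (continuous_snd.prodMk continuous_fst)
  · intro a b
    rw [ext_incl hee a b, ext_incl hee b a]
    exact hdd.1.1 a b

lemma ext_tri (hdd : MemD α Ω dd) (hee : IsContExt Ω dd ee) :
    ∀ p q r : closure Ω, ee p r ≤ ee p q + ee q r := by
  refine closure_prop3 _ ?_ ?_
  · refine isClosed_le ?_ ?_
    · exact hee.1.comp (continuous_fst.prodMk (continuous_snd.comp continuous_snd))
    · exact (hee.1.comp (continuous_fst.prodMk (continuous_fst.comp continuous_snd))).add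
        (hee.1.comp ((continuous_fst.comp continuous_snd).prodMk
          (continuous_snd.comp continuous_snd)))
  · intro a b c
    rw [ext_incl hee a b, ext_incl hee b c, ext_incl hee a c]
    exact hdd.1.2.1 a b c

end ExtFacts

/-- Uniform 2α-Lipschitz estimate for members of `MemD`. -/
lemma memD_lip {α : ℝ} {dd : Ω → Ω → ℝ} (hdd : MemD α Ω dd) (x y x' y' : Ω) :
    |dd x y - dd x' y'| ≤ α * (dist (x : X) (x' : X) + dist (y : X) (y' : X)) := by
  have tri := hdd.1.2.1
  have hub : ∀ u v : Ω, dd u v ≤ α * dist (u : X) (v : X) := fun u v => (hdd.2.2 u v).2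
  have hdistrib : α * (dist (x : X) (x' : X) + dist (y : X) (y' : X))
      = α * dist (x : X) (x' : X) + α * dist (y : X) (y' : X) := mul_add _ _ _
  rw [abs_le, hdistrib]
  constructor
  · have h1 : dd x' y' ≤ dd x' x + dd x y + dd y y' := by
      have ha := tri x' x y
      have hb := tri x' y y'
      linarith
    have h2 : dd x' x ≤ α * dist (x : X) (x' : X) := by
      have := hub x' x; rwa [dist_comm] at this
    have h3 : dd y y' ≤ α * dist (y : X) (y' : X) := hub y y'
    linarith
  · have h1 : dd x y ≤ dd x x' + dd x' y' + dd y' y := by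
      have ha := tri x x' y'
      have hb := tri x y' y
      linarith
    have h2 : dd x x' ≤ α * dist (x : X) (x' : X) := hub x x'
    have h3 : dd y' y ≤ α * dist (y : X) (y' : X) := by
      have := hub y' y; rwa [dist_comm] at this
    linarith

/-- Pointwise convergence plus the uniform Lipschitz bound upgrades to uniform
convergence on compact subsets. -/
lemma unif_of_pointwise {α : ℝ} (hα : 1 < α)
    {dn : ℕ → Ω → Ω → ℝ} (hdn : ∀ n, MemD α Ω (dn n)) {d : Ω → Ω → ℝ} (hd : MemD α Ω d)
    (hpt : ∀ x y : Ω, ∀ ε : ℝ, 0 < ε → ∀ᶠ n in atTop, |dn n x y - d x y| < ε) :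
    ∀ K : Set (Ω × Ω), IsCompact K → ∀ ε : ℝ, 0 < ε →
      ∃ N : ℕ, ∀ n ≥ N, ∀ p ∈ K, |dn n p.1 p.2 - d p.1 p.2| < ε := by
  intro K hK ε hε
  have hα0 : (0:ℝ) < α := lt_trans one_pos hα
  set r : ℝ := ε / (12 * α) with hrdef
  have hr : 0 < r := by positivity
  obtain ⟨t, htK, hcov⟩ := hK.elim_nhds_subcover (fun p => Metric.ball p r)
    (fun p _ => Metric.ball_mem_nhds p hr)
  have hev : ∀ᶠ n in atTop, ∀ p ∈ t, |dn n p.1 p.2 - d p.1 p.2| < ε / 3 := by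
    rw [eventually_all_finset]
    intro p _
    exact hpt p.1 p.2 (ε/3) (by positivity)
  obtain ⟨N, hN⟩ := eventually_atTop.1 hev
  refine ⟨N, fun n hn p hp => ?_⟩
  obtain ⟨q, hq, hpq⟩ := Set.mem_iUnion₂.1 (hcov hp)
  rw [Metric.mem_ball] at hpq
  have hd1 : dist (p.1 : X) (q.1 : X) ≤ dist p q := by
    rw [← Subtype.dist_eq, Prod.dist_eq]
    exact le_max_left _ _
  have hd2 : dist (p.2 : X) (q.2 : X) ≤ dist p q := by
    rw [← Subtype.dist_eq, Prod.dist_eq]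
    exact le_max_right _ _
  have hlip1 := memD_lip (hdn n) p.1 p.2 q.1 q.2
  have hlip2 := memD_lip hd p.1 p.2 q.1 q.2
  have hq3 := hN n hn q hq
  have hbound : α * (dist (p.1 : X) (q.1 : X) + dist (p.2 : X) (q.2 : X)) ≤ 2 * α * dist p q := by
    nlinarith
  have h2ar : 2 * α * dist p q < ε / 6 := by
    calc 2 * α * dist p q < 2 * α * r := by nlinarith
      _ = ε / 6 := by rw [hrdef]; field_simp; ring
  calc |dn n p.1 p.2 - d p.1 p.2|
      ≤ |dn n p.1 p.2 - dn n q.1 q.2| + |dn n q.1 q.2 - d q.1 q.2| + |d q.1 q.2 - d p.1 p.2| := by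
        have := abs_sub_le (dn n p.1 p.2) (dn n q.1 q.2) (d p.1 p.2)
        have := abs_sub_le (dn n q.1 q.2) (d q.1 q.2) (d p.1 p.2)
        linarith
    _ < ε / 6 + ε / 3 + ε / 6 := by
        have e1 : |dn n p.1 p.2 - dn n q.1 q.2| < ε / 6 := lt_of_le_of_lt (le_trans hlip1 hbound) h2ar
        have e3 : |d q.1 q.2 - d p.1 p.2| < ε / 6 := by
          rw [abs_sub_comm]
          exact lt_of_le_of_lt (le_trans hlip2 hbound) h2ar
        linarith
    _ < ε := by linarith

lemma memD_dist_le {α : ℝ} (hα : 0 < α) {dd : Ω → Ω → ℝ} (hdd : MemD α Ω dd) (u v : Ω) :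
    dist (u : X) (v : X) ≤ α * dd u v := by
  have h := (hdd.2.2 u v).1
  calc dist (u : X) (v : X) = α * (α⁻¹ * dist (u : X) (v : X)) := by field_simp
    _ ≤ α * dd u v := by nlinarith

lemma pointwise_upper {α : ℝ} (hα : 1 < α)
    {dn : ℕ → Ω → Ω → ℝ} (hdn : ∀ n, MemD α Ω (dn n)) {d : Ω → Ω → ℝ} (hd : MemD α Ω d)
    {en : ℕ → closure Ω → closure Ω → ℝ} (hen : ∀ n, IsContExt Ω (dn n) (en n))
    {e : closure Ω → closure Ω → ℝ} (he : IsContExt Ω d e)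
    (hG2 : ∀ γ : ℝ → closure Ω, LipCurve (fun x y : closure Ω => dist x y) γ →
      ∃ γn : ℕ → ℝ → closure Ω, (∀ n, LipCurve (fun x y : closure Ω => dist x y) (γn n)) ∧
        UnifConvCurves γn γ ∧
        limsup (fun n => pathLength (en n) (γn n)) atTop ≤ pathLength e γ)
    (x y : Ω) {ε : ℝ} (hε : 0 < ε) : ∀ᶠ n in atTop, dn n x y < d x y + ε := by
  have hα0 : (0:ℝ) < α := lt_trans one_pos hα
  have hdxy : 0 ≤ d x y := isd_nonneg hd.1 x y
  -- a near-geodesic for d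
  have hlt : (⨅ (γ : ℝ → Ω) (_ : LipCurve d γ) (_ : γ 0 = x) (_ : γ 1 = y), pathLength d γ)
      < ENNReal.ofReal (d x y) + ENNReal.ofReal (ε/4) := by
    rw [← hd.2.1 x y]
    exact ENNReal.lt_add_right ENNReal.ofReal_ne_top
      (ne_of_gt (ENNReal.ofReal_pos.2 (by positivity)))
  simp only [iInf_lt_iff] at hlt
  obtain ⟨γ, hγlip, hγ0, hγ1, hγlen⟩ := hlt
  set ιγ : ℝ → closure Ω := fun t => incl Ω (γ t) with hιγdef
  have hιlip : LipCurve (fun x y : closure Ω => dist x y) ιγ := by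
    obtain ⟨K, hK⟩ := hγlip
    refine ⟨α * K, fun s hs t ht => ?_⟩
    have h1 : dist (ιγ s) (ιγ t) = dist ((γ s : X)) ((γ t : X)) := rfl
    calc dist (ιγ s) (ιγ t) = dist ((γ s : X)) ((γ t : X)) := h1
      _ ≤ α * d (γ s) (γ t) := memD_dist_le hα0 hd _ _
      _ ≤ α * (K * |s - t|) := by
          have := hK s hs t ht
          nlinarith
      _ = α * K * |s - t| := by ring
  obtain ⟨γn, hγnlip, hγnconv, hlimsup⟩ := hG2 ιγ hιlip
  have heq : pathLength e ιγ = pathLength d γ :=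
    pathLengthOn_congr (fun s t => he.2 (γ s) (γ t)) 0 1
  have hB : pathLength d γ < ENNReal.ofReal (d x y + ε/4) := by
    rw [ENNReal.ofReal_add hdxy (by positivity : (0:ℝ) ≤ ε/4)]
    exact hγlen
  have hev1 : ∀ᶠ n in atTop, pathLength (en n) (γn n) < ENNReal.ofReal (d x y + ε/4) :=
    eventually_lt_of_limsup_lt (lt_of_le_of_lt hlimsup (by rw [heq]; exact hB))
  obtain ⟨N1, hN1⟩ := eventually_atTop.1 hev1
  obtain ⟨N2, hN2⟩ := hγnconv (ε/(4*α)) (by positivity)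
  refine eventually_atTop.2 ⟨max N1 N2, fun n hn => ?_⟩
  have hn1 : n ≥ N1 := le_trans (le_max_left _ _) hn
  have hn2 : n ≥ N2 := le_trans (le_max_right _ _) hn
  have h0dist : dist (γn n 0) (incl Ω x) < ε/(4*α) := by
    have := hN2 n hn2 0 ⟨le_rfl, zero_le_one⟩
    have heq0 : ιγ 0 = incl Ω x := by show incl Ω (γ 0) = _; rw [hγ0]
    rwa [heq0] at this
  have h1dist : dist (γn n 1) (incl Ω y) < ε/(4*α) := by
    have := hN2 n hn2 1 ⟨zero_le_one, le_rfl⟩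
    have heq1 : ιγ 1 = incl Ω y := by show incl Ω (γ 1) = _; rw [hγ1]
    rwa [heq1] at this
  have htri1 : en n (incl Ω x) (incl Ω y) ≤
      en n (incl Ω x) (γn n 0) + en n (γn n 0) (γn n 1) + en n (γn n 1) (incl Ω y) := by
    have t1 := ext_tri (hdn n) (hen n) (incl Ω x) (γn n 0) (incl Ω y)
    have t2 := ext_tri (hdn n) (hen n) (γn n 0) (γn n 1) (incl Ω y)
    linarith
  have hb1 : en n (incl Ω x) (γn n 0) < ε/4 := by
    calc en n (incl Ω x) (γn n 0) ≤ α * dist ((incl Ω x : X)) ((γn n 0 : X)) :=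
          ext_le hα0 (hdn n) (hen n) _ _
      _ = α * dist (γn n 0) (incl Ω x) := by rw [Subtype.dist_eq, dist_comm]
      _ < α * (ε/(4*α)) := by nlinarith
      _ = ε/4 := by field_simp
  have hb3 : en n (γn n 1) (incl Ω y) < ε/4 := by
    calc en n (γn n 1) (incl Ω y) ≤ α * dist ((γn n 1 : X)) ((incl Ω y : X)) :=
          ext_le hα0 (hdn n) (hen n) _ _
      _ = α * dist (γn n 1) (incl Ω y) := by rw [Subtype.dist_eq]
      _ < α * (ε/(4*α)) := by nlinarith
      _ = ε/4 := by field_simp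
  have hb2 : en n (γn n 0) (γn n 1) < d x y + ε/4 := by
    have hle : ENNReal.ofReal (en n (γn n 1) (γn n 0)) ≤ pathLength (en n) (γn n) :=
      ofReal_le_pathLengthOn (en n) (γn n) zero_le_one
    have hlt2 : ENNReal.ofReal (en n (γn n 1) (γn n 0)) < ENNReal.ofReal (d x y + ε/4) :=
      lt_of_le_of_lt hle (hN1 n hn1)
    have := (ENNReal.ofReal_lt_ofReal_iff (by positivity)).1 hlt2
    rwa [ext_symm (hdn n) (hen n)]
  have hfinal : dn n x y = en n (incl Ω x) (incl Ω y) := (ext_incl (hen n) x y).symm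
  rw [hfinal]
  calc en n (incl Ω x) (incl Ω y) ≤ _ + _ + _ := htri1
    _ < ε/4 + (d x y + ε/4) + ε/4 := by linarith
    _ < d x y + ε := by linarith

lemma pointwise_lower [CompleteSpace X] [LocallyCompactSpace X] {α : ℝ} (hα : 1 < α)
    {dn : ℕ → Ω → Ω → ℝ} (hdn : ∀ n, MemD α Ω (dn n)) {d : Ω → Ω → ℝ} (hd : MemD α Ω d)
    {en : ℕ → closure Ω → closure Ω → ℝ} (hen : ∀ n, IsContExt Ω (dn n) (en n))
    {e : closure Ω → closure Ω → ℝ} (he : IsContExt Ω d e)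
    (hG1 : ∀ (γn : ℕ → ℝ → closure Ω) (γ : ℝ → closure Ω),
      (∀ n, LipCurve (fun x y : closure Ω => dist x y) (γn n)) →
      LipCurve (fun x y : closure Ω => dist x y) γ → UnifConvCurves γn γ →
      pathLength e γ ≤ liminf (fun n => pathLength (en n) (γn n)) atTop)
    (x y : Ω) {δ : ℝ} (hδ : 0 < δ) : ∀ᶠ n in atTop, d x y - δ < dn n x y := by
  classical
  by_contra hcon
  rw [Filter.not_eventually] at hcon
  have hfreq : ∃ᶠ n in atTop, dn n x y ≤ d x y - δ := hcon.mono fun n h => not_lt.1 h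
  obtain ⟨ψ, hψmono, hψ⟩ := Filter.extraction_of_frequently_atTop hfreq
  have hα0 : (0:ℝ) < α := lt_trans one_pos hα
  have hdip : ∀ n, 0 ≤ dn n x y := fun n => isd_nonneg (hdn n).1 x y
  have hdxyδ : 0 ≤ d x y - δ := le_trans (hdip (ψ 0)) (hψ 0)
  set M₀ : ℝ := α * dist (x : X) (y : X) + 1 with hM₀def
  have hM₀0 : 0 < M₀ := by
    have : 0 ≤ α * dist (x : X) (y : X) := mul_nonneg hα0.le dist_nonneg
    rw [hM₀def]; linarith
  -- select near-geodesics for each `dn n`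
  have sel : ∀ n, ∃ γ : ℝ → Ω, LipCurve (dn n) γ ∧ γ 0 = x ∧ γ 1 = y ∧
      pathLength (dn n) γ < ENNReal.ofReal (dn n x y + 1/(n+1)) := by
    intro n
    have h1n : (0:ℝ) < 1/((n:ℝ)+1) := by positivity
    have hlt : (⨅ (γ : ℝ → Ω) (_ : LipCurve (dn n) γ) (_ : γ 0 = x) (_ : γ 1 = y),
        pathLength (dn n) γ) < ENNReal.ofReal (dn n x y + 1/(n+1)) := by
      rw [← (hdn n).2.1 x y]
      refine (ENNReal.ofReal_lt_ofReal_iff ?_).2 ?_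
      · have := hdip n; push_cast; linarith
      · push_cast; linarith
    simp only [iInf_lt_iff] at hlt
    obtain ⟨γ, h1, h2, h3, h4⟩ := hlt
    exact ⟨γ, h1, h2, h3, h4⟩
  choose γs hγslip hγs0 hγs1 hγslen using sel
  -- constant-speed reparametrizations
  have cs : ∀ n, ∃ γ' : ℝ → Ω, γ' 0 = γs n 0 ∧ γ' 1 = γs n 1 ∧
      (∀ u : ℝ, ∃ t ∈ Icc (0:ℝ) 1, γ' u = γs n t) ∧
      (∀ u v : ℝ, u ∈ Icc (0:ℝ) 1 → v ∈ Icc (0:ℝ) 1 →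
        dn n (γ' u) (γ' v) ≤ (pathLength (dn n) (γs n)).toReal * |u - v|) ∧
      pathLength (dn n) γ' ≤ pathLength (dn n) (γs n) :=
    fun n => exists_constSpeed (hdn n).1 (hγslip n)
  choose γt h0t h1t hrange hlipt hlent using cs
  set ℓ : ℕ → ℝ := fun n => (pathLength (dn n) (γs n)).toReal with hℓdef
  have hℓ0 : ∀ n, 0 ≤ ℓ n := fun n => ENNReal.toReal_nonneg
  have g0 : ∀ n, γt n 0 = x := fun n => (h0t n).trans (hγs0 n)
  have g1 : ∀ n, γt n 1 = y := fun n => (h1t n).trans (hγs1 n)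
  have hℓle : ∀ n, ℓ n ≤ dn n x y + 1/(n+1) := by
    intro n
    have h1n : (0:ℝ) ≤ 1/((n:ℝ)+1) := by positivity
    have := ENNReal.toReal_mono ENNReal.ofReal_ne_top (hγslen n).le
    rwa [ENNReal.toReal_ofReal (by push_cast; have := hdip n; linarith)] at this
  have hℓM : ∀ n, ℓ n ≤ M₀ := by
    intro n
    have h1 : (1:ℝ)/((n:ℝ)+1) ≤ 1 := by
      rw [div_le_one (by positivity)]; push_cast; linarith [Nat.cast_nonneg (α := ℝ) n]
    have h2 := (hdn n).2.2 x y
    have := hℓle n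
    rw [hM₀def]
    push_cast at this ⊢
    linarith [h2.2]
  set M : ℝ := α * M₀ with hMdef
  have hM0 : 0 ≤ M := by positivity
  have hdlip : ∀ n, ∀ u ∈ Icc (0:ℝ) 1, ∀ v ∈ Icc (0:ℝ) 1,
      dist ((γt n u : X)) ((γt n v : X)) ≤ M * |u - v| := by
    intro n u hu v hv
    calc dist ((γt n u : X)) ((γt n v : X)) ≤ α * dn n (γt n u) (γt n v) :=
          memD_dist_le hα0 (hdn n) _ _
      _ ≤ α * (ℓ n * |u - v|) := by
          have := hlipt n u v hu hv
          nlinarith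
      _ ≤ M * |u - v| := by
          have h1 := hℓM n
          have h2 := abs_nonneg (u - v)
          have h4 : ℓ n * |u - v| ≤ M₀ * |u - v| := mul_le_mul_of_nonneg_right h1 h2
          have h5 : α * (ℓ n * |u - v|) ≤ α * (M₀ * |u - v|) :=
            mul_le_mul_of_nonneg_left h4 hα0.le
          rw [hMdef, mul_assoc]
          exact h5
  -- all curve points lie in a fixed totally bounded reachable set
  have hreach : ∀ n, ∀ t ∈ Icc (0:ℝ) 1, ((γt n t : X)) ∈ reach d x (α^2 * M₀) := by
    intro n t ht
    have hkey : ∀ u ∈ Icc (0:ℝ) 1, ∀ v ∈ Icc (0:ℝ) 1,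
        d (γt n (t * u)) (γt n (t * v)) ≤ α^2 * M₀ * |u - v| := by
      intro u hu v hv
      have htu : t * u ∈ Icc (0:ℝ) 1 :=
        ⟨mul_nonneg ht.1 hu.1, le_trans (mul_le_mul ht.2 hu.2 hu.1 zero_le_one) (by norm_num)⟩
      have htv : t * v ∈ Icc (0:ℝ) 1 :=
        ⟨mul_nonneg ht.1 hv.1, le_trans (mul_le_mul ht.2 hv.2 hv.1 zero_le_one) (by norm_num)⟩
      have h1 : d (γt n (t*u)) (γt n (t*v)) ≤ α * dist ((γt n (t*u) : X)) ((γt n (t*v) : X)) :=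
        (hd.2.2 _ _).2
      have h2 := hdlip n _ htu _ htv
      have h3 : |t * u - t * v| = t * |u - v| := by
        rw [← mul_sub, abs_mul, abs_of_nonneg ht.1]
      rw [h3] at h2
      have h4 : α * (M * (t * |u - v|)) ≤ α^2 * M₀ * |u - v| := by
        rw [hMdef]
        have h5 := abs_nonneg (u - v)
        have h6 : t * |u - v| ≤ |u - v| := mul_le_of_le_one_left h5 ht.2
        have h7 : α * M₀ * (t * |u - v|) ≤ α * M₀ * |u - v| :=
          mul_le_mul_of_nonneg_left h6 (by positivity)
        have h8 : α * (α * M₀ * (t * |u - v|)) ≤ α * (α * M₀ * |u - v|) :=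
          mul_le_mul_of_nonneg_left h7 hα0.le
        exact h8.trans_eq (by ring)
      nlinarith
    refine ⟨γt n t, rfl, fun u => γt n (t * u), ⟨α^2 * M₀, fun u hu v hv => hkey u hu v hv⟩,
      ?_, by show γt n (t * 1) = γt n t; rw [mul_one], ?_⟩
    · show γt n (t * 0) = x
      rw [mul_zero, g0 n]
    · have := pathLengthOn_le_of_lipOn d (fun u => γt n (t * u)) (K := α^2 * M₀)
        (by positivity) zero_le_one (fun s u hs hsu hu => by
          have := hkey u ⟨le_trans hs hsu, hu⟩ s ⟨hs, le_trans hsu hu⟩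
          rwa [abs_of_nonneg (by linarith)] at this)
      rw [pathLength]
      calc pathLengthOn d (fun u => γt n (t * u)) 0 1
          ≤ ENNReal.ofReal (α^2 * M₀ * (1 - 0)) := this
        _ = ENNReal.ofReal (α^2 * M₀) := by norm_num
  -- the compact container
  have htb := reach_totallyBounded hα hd.1 (fun u v => (hd.2.2 u v).1) x (α^2 * M₀)
  set T : Set X := closure (reach d x (α^2 * M₀)) with hTdef
  have hTcomp : IsCompact T := TotallyBounded.isCompact_of_isClosed htb.closure isClosed_closure
  have hTsub : T ⊆ closure Ω := closure_minimal ((reach_subset_coe d x _).trans subset_closure) isClosed_closure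
  -- the curves as bounded continuous functions on [0,1]
  set I01 := Icc (0:ℝ) 1
  have hcont : ∀ k : ℕ, Continuous (fun t : I01 => ((γt (ψ k) t.1 : X))) := by
    intro k
    refine LipschitzWith.continuous (K := Real.toNNReal M) ?_
    refine LipschitzWith.of_dist_le_mul fun t s => ?_
    rw [Real.coe_toNNReal M hM0, Subtype.dist_eq, Real.dist_eq]
    exact hdlip (ψ k) t.1 t.2 s.1 s.2
  set fn : ℕ → BoundedContinuousFunction ↥I01 X := fun k =>
    BoundedContinuousFunction.mkOfCompact ⟨fun t : I01 => ((γt (ψ k) t.1 : X)), hcont k⟩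
    with hfndef
  have hfn_apply : ∀ k (t : I01), fn k t = ((γt (ψ k) t.1 : X)) := fun k t => rfl
  set A : Set (BoundedContinuousFunction ↥I01 X) := Set.range fn with hAdef
  have hin : ∀ (f : BoundedContinuousFunction ↥I01 X) (t : I01), f ∈ A → f t ∈ T := by
    rintro f t ⟨k, rfl⟩
    exact subset_closure (hreach (ψ k) t.1 t.2)
  have hequi : Equicontinuous ((↑) : A → I01 → X) := by
    intro t₀
    rw [Metric.equicontinuousAt_iff]
    intro ε hε
    refine ⟨ε/(M+1), by positivity, fun t ht i => ?_⟩
    obtain ⟨k, hk⟩ := i.2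
    have : (i : BoundedContinuousFunction ↥I01 X) = fn k := hk.symm
    rw [this, hfn_apply, hfn_apply]
    have h1 := hdlip (ψ k) t₀.1 t₀.2 t.1 t.2
    have h2 : |t₀.1 - t.1| < ε/(M+1) := by
      rw [← Real.dist_eq, ← Subtype.dist_eq, dist_comm]
      exact ht
    have h3 : 0 ≤ |t₀.1 - t.1| := abs_nonneg _
    have h4 : M * (ε/(M+1)) < ε := by
      calc M * (ε/(M+1)) = ε * (M/(M+1)) := by ring
        _ < ε * 1 := by
            refine mul_lt_mul_of_pos_left ?_ hε
            rw [div_lt_one (by linarith : (0:ℝ) < M + 1)]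
            linarith
        _ = ε := mul_one ε
    calc dist ((γt (ψ k) t₀.1 : X)) ((γt (ψ k) t.1 : X)) ≤ M * |t₀.1 - t.1| := h1
      _ ≤ M * (ε/(M+1)) := mul_le_mul_of_nonneg_left h2.le hM0
      _ < ε := h4
  have hAcomp : IsCompact (closure A) :=
    BoundedContinuousFunction.arzela_ascoli T hTcomp A hin hequi
  have hmemA : ∀ k, fn k ∈ closure A := fun k => subset_closure ⟨k, rfl⟩
  obtain ⟨f, hfA, φ, hφmono, hφconv⟩ := hAcomp.tendsto_subseq hmemA
  have hfdist : ∀ ε > 0, ∃ N, ∀ k ≥ N, dist (fn (φ k)) f < ε := Metric.tendsto_atTop.1 hφconv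
  have hptconv : ∀ t : I01, Tendsto (fun k => fn (φ k) t) atTop (𝓝 (f t)) := by
    intro t
    rw [tendsto_iff_dist_tendsto_zero]
    refine squeeze_zero (fun k => dist_nonneg)
      (fun k => BoundedContinuousFunction.dist_coe_le_dist t) ?_
    exact tendsto_iff_dist_tendsto_zero.1 hφconv
  have hfT : ∀ t : I01, f t ∈ T := by
    intro t
    refine hTcomp.isClosed.mem_of_tendsto (hptconv t) (Eventually.of_forall fun k => ?_)
    exact subset_closure (hreach (ψ (φ k)) t.1 t.2)
  have t0I : (0:ℝ) ∈ I01 := ⟨le_rfl, zero_le_one⟩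
  have t1I : (1:ℝ) ∈ I01 := ⟨zero_le_one, le_rfl⟩
  have hf0 : f ⟨0, t0I⟩ = (x : X) := by
    have h := hptconv ⟨0, t0I⟩
    have hconst : (fun k => fn (φ k) ⟨0, t0I⟩) = fun _ => (x : X) := by
      funext k
      rw [hfn_apply]
      show ((γt (ψ (φ k)) 0 : Ω) : X) = (x : X)
      rw [g0]
    rw [hconst] at h
    exact (tendsto_nhds_unique h tendsto_const_nhds)
  have hf1 : f ⟨1, t1I⟩ = (y : X) := by
    have h := hptconv ⟨1, t1I⟩
    have hconst : (fun k => fn (φ k) ⟨1, t1I⟩) = fun _ => (y : X) := by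
      funext k
      rw [hfn_apply]
      show ((γt (ψ (φ k)) 1 : Ω) : X) = (y : X)
      rw [g1]
    rw [hconst] at h
    exact (tendsto_nhds_unique h tendsto_const_nhds)
  -- the limit curve
  set cl : ℝ → ℝ := fun t => max 0 (min 1 t) with hcldef
  have hclmem : ∀ t, cl t ∈ I01 := fun t =>
    ⟨le_max_left _ _, max_le zero_le_one (min_le_left _ _)⟩
  have hclid : ∀ t ∈ I01, cl t = t := by
    intro t ht
    rw [hcldef]
    dsimp only
    rw [min_eq_right ht.2, max_eq_right ht.1]
  set γlim : ℝ → closure Ω := fun t => ⟨f ⟨cl t, hclmem t⟩, hTsub (hfT _)⟩ with hγlimdef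
  have hγlim_at : ∀ t (ht : t ∈ I01), γlim t = ⟨f ⟨t, ht⟩, hTsub (hfT _)⟩ := by
    intro t ht
    rw [hγlimdef]
    apply Subtype.ext
    show f ⟨cl t, hclmem t⟩ = f ⟨t, ht⟩
    congr 1
    exact Subtype.ext (hclid t ht)
  have hγlimlipIcc : ∀ u v : ℝ, u ∈ I01 → v ∈ I01 →
      dist (γlim u) (γlim v) ≤ M * |u - v| := by
    intro u v hu hv
    rw [hγlim_at u hu, hγlim_at v hv]
    have hlim := (hptconv ⟨u, hu⟩).dist (hptconv ⟨v, hv⟩)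
    refine le_of_tendsto hlim (Eventually.of_forall fun k => ?_)
    rw [hfn_apply, hfn_apply]
    exact hdlip (ψ (φ k)) u hu v hv
  have hγlimlip : LipCurve (fun p q : closure Ω => dist p q) γlim :=
    ⟨M, fun s hs t ht => hγlimlipIcc s t hs ht⟩
  -- the competitor sequence
  set γ' : ℕ → ℝ → closure Ω := fun m =>
    if h : ∃ k, ψ (φ k) = m then (fun t => incl Ω (γt m t)) else γlim with hγ'def
  have hγ'lip : ∀ m, LipCurve (fun p q : closure Ω => dist p q) (γ' m) := by
    intro m
    simp only [hγ'def]
    by_cases h : ∃ k, ψ (φ k) = m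
    · rw [dif_pos h]
      exact ⟨M, fun s hs t ht => hdlip m s hs t ht⟩
    · rw [dif_neg h]
      exact hγlimlip
  have hconv' : UnifConvCurves γ' γlim := by
    intro ε hε
    obtain ⟨N₁, hN₁⟩ := hfdist ε hε
    refine ⟨ψ (φ N₁), fun m hm t ht => ?_⟩
    have hγ'm : γ' m = if h : ∃ k, ψ (φ k) = m then (fun t => incl Ω (γt m t)) else γlim := by
      simp only [hγ'def]
    by_cases h : ∃ k, ψ (φ k) = m
    · obtain ⟨k, hk⟩ := h
      have hkN : N₁ ≤ k := by
        have hcomp : StrictMono (fun j => ψ (φ j)) := hψmono.comp hφmono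
        have : ψ (φ N₁) ≤ ψ (φ k) := by rw [hk]; exact hm
        exact hcomp.le_iff_le.1 this
      rw [hγ'm, dif_pos ⟨k, hk⟩]
      have heq : dist (incl Ω (γt m t)) (γlim t) = dist (fn (φ k) ⟨t, ht⟩) (f ⟨t, ht⟩) := by
        rw [hγlim_at t ht]
        show dist ((γt m t : X)) (f ⟨t, ht⟩) = dist ((fn (φ k)) ⟨t, ht⟩) (f ⟨t, ht⟩)
        rw [hfn_apply (φ k) ⟨t, ht⟩, hk]
      rw [heq]
      exact lt_of_le_of_lt (BoundedContinuousFunction.dist_coe_le_dist _) (hN₁ k hkN)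
    · rw [hγ'm, dif_neg h, dist_self]
      exact hε
  -- apply the Γ-liminf inequality
  have hliminf := hG1 γ' γlim hγ'lip hγlimlip hconv'
  -- frequently, the lengths are small
  obtain ⟨N₀, hN₀⟩ := exists_nat_one_div_lt (show (0:ℝ) < δ/2 by positivity)
  have hfreq2 : ∃ᶠ m in atTop,
      pathLength (en m) (γ' m) ≤ ENNReal.ofReal (d x y - δ/2) := by
    rw [Filter.frequently_atTop]
    intro N
    set k₀ := max N N₀ with hk₀def
    set m := ψ (φ k₀) with hmdef
    have hcomp : StrictMono (fun j => ψ (φ j)) := hψmono.comp hφmono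
    have hmk : k₀ ≤ m := hcomp.le_apply
    refine ⟨m, le_trans (le_max_left _ _) hmk, ?_⟩
    have hmex : ∃ k, ψ (φ k) = m := ⟨k₀, rfl⟩
    have hγ'm : γ' m = fun t => incl Ω (γt m t) := by rw [hγ'def]; exact dif_pos hmex
    rw [hγ'm]
    have hcongr : pathLength (en m) (fun t => incl Ω (γt m t))
        = pathLength (dn m) (γt m) :=
      pathLengthOn_congr (fun s t => (hen m).2 _ _) 0 1
    rw [hcongr]
    have hP2 : pathLength (dn m) (γt m) ≤ ENNReal.ofReal (ℓ m * (1 - 0)) := by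
      rw [pathLength]
      refine pathLengthOn_le_of_lipOn _ _ (hℓ0 m) zero_le_one fun s t hs hst ht => ?_
      have := hlipt m t s ⟨le_trans hs hst, ht⟩ ⟨hs, le_trans hst ht⟩
      rwa [abs_of_nonneg (by linarith)] at this
    have hδm : 1/((m:ℝ)+1) ≤ δ/2 := by
      have h1 : ((N₀:ℝ)+1) ≤ ((m:ℝ)+1) := by
        have : N₀ ≤ m := le_trans (le_max_right _ _) hmk
        push_cast
        exact_mod_cast add_le_add_left (Nat.cast_le.2 this) 1
      calc 1/((m:ℝ)+1) ≤ 1/((N₀:ℝ)+1) :=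
            one_div_le_one_div_of_le (by positivity) h1
        _ ≤ δ/2 := hN₀.le
    have hdnm : dn m x y ≤ d x y - δ := hψ (φ k₀)
    calc pathLength (dn m) (γt m) ≤ ENNReal.ofReal (ℓ m * (1 - 0)) := hP2
      _ = ENNReal.ofReal (ℓ m) := by norm_num
      _ ≤ ENNReal.ofReal (d x y - δ/2) := by
          refine ENNReal.ofReal_le_ofReal ?_
          have := hℓle m
          linarith
  have hub : liminf (fun m => pathLength (en m) (γ' m)) atTop
      ≤ ENNReal.ofReal (d x y - δ/2) := liminf_le_of_frequently_le hfreq2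
  -- lower bound on the Γ-limit
  have hγlim0 : γlim 0 = incl Ω x := by
    rw [hγlim_at 0 t0I]
    exact Subtype.ext hf0
  have hγlim1 : γlim 1 = incl Ω y := by
    rw [hγlim_at 1 t1I]
    exact Subtype.ext hf1
  have hlow : ENNReal.ofReal (d x y) ≤ pathLength e γlim := by
    have h := ofReal_le_pathLengthOn e γlim zero_le_one
    rwa [hγlim1, hγlim0, ext_incl he y x, hd.1.1 y x] at h
  have hfinal : ENNReal.ofReal (d x y) ≤ ENNReal.ofReal (d x y - δ/2) :=
    le_trans hlow (le_trans hliminf hub)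
  have : d x y ≤ d x y - δ/2 :=
    (ENNReal.ofReal_le_ofReal_iff (by linarith)).1 hfinal
  linarith

end Stmt8Aux

/-- Γ-convergence of the length functionals of the extended distances
implies uniform convergence of the distances on compact subsets of `Ω × Ω`. -/
theorem stmt8 {X : Type*} [MetricSpace X] [LocallyCompactSpace X] [CompleteSpace X]
    (Ω : Set X) (hΩ : IsOpen Ω) (α : ℝ) (hα : 1 < α)
    (hne : ∃ d₀ : Ω → Ω → ℝ, MemD α Ω d₀)
    (dn : ℕ → Ω → Ω → ℝ) (hdn : ∀ n, MemD α Ω (dn n))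
    (d : Ω → Ω → ℝ) (hd : MemD α Ω d)
    (en : ℕ → closure Ω → closure Ω → ℝ) (hen : ∀ n, IsContExt Ω (dn n) (en n))
    (e : closure Ω → closure Ω → ℝ) (he : IsContExt Ω d e)
    (hGamma : GammaConvLengths en e) :
    TendstoUnifCompactly dn d := by
  intro K hK ε hε
  refine Stmt8Aux.unif_of_pointwise hα hdn hd ?_ K hK ε hε
  intro x y ε' hε'
  have hup := Stmt8Aux.pointwise_upper hα hdn hd hen he hGamma.2 x y hε'
  have hlo := Stmt8Aux.pointwise_lower hα hdn hd hen he hGamma.1 x y hε'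
  filter_upwards [hup, hlo] with n h1 h2
  rw [abs_lt]
  constructor <;> linarith
end

section
/- Let (X, D) be a locally compact, complete metric space, α > 1, and Ω ⊆ X an open set with D_α(Ω) ≠ ∅. Let (d_n)_{n∈ℕ} ⊆ D_α(Ω) and d ∈ D_α(Ω). If d_n → d uniformly on compact subsets of Ω × Ω, then the functionals F_{d_n} Γ-converge to F_d on Lip(Ω) equipped with the topology of uniform convergence on compact subsets of Ω: (liminf) for every sequence (u_n) ⊆ Lip(Ω) converging to u ∈ Lip(Ω) uniformly on compact sets, one has F_d(u) ≤ liminf_n F_{d_n}(u_n); (limsup) for every u ∈ Lip(Ω) there exists (u_n) ⊆ Lip(Ω) converging to u uniformly on compact sets with limsup_n F_{d_n}(u_n) ≤ F_d(u). -/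
open Filter MeasureTheory Set
open scoped ENNReal Topology

/-- The functional `F_d`: `0` on `1`-Lipschitz functions (w.r.t. `d`), `+∞` otherwise. -/
noncomputable def Ffun {E : Type*} (d : E → E → ℝ) (u : E → ℝ) : ℝ≥0∞ := by
  classical exact if ∀ x y : E, |u x - u y| ≤ d x y then 0 else ⊤

/-- Uniform convergence on compact subsets of `E` for real-valued functions. -/
def UnifConvCompactsFun {E : Type*} [TopologicalSpace E] (un : ℕ → E → ℝ) (u : E → ℝ) : Prop :=
  ∀ K : Set E, IsCompact K → ∀ ε : ℝ, 0 < ε →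
    ∃ N : ℕ, ∀ n ≥ N, ∀ x ∈ K, |un n x - u x| < ε

/-- `u` is a real-valued Lipschitz function on the metric space `E`. -/
def IsLipFun {E : Type*} [MetricSpace E] (u : E → ℝ) : Prop :=
  ∃ K : NNReal, LipschitzWith K u

open Metric

lemma Ffun_eq_zero {E : Type*} {d : E → E → ℝ} {u : E → ℝ}
    (h : ∀ x y : E, |u x - u y| ≤ d x y) : Ffun d u = 0 := by
  unfold Ffun; exact if_pos h

lemma Ffun_eq_top {E : Type*} {d : E → E → ℝ} {u : E → ℝ}
    (h : ¬ ∀ x y : E, |u x - u y| ≤ d x y) : Ffun d u = ⊤ := by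
  unfold Ffun; exact if_neg h

private lemma exists_curve {X : Type*} [MetricSpace X] {Ω : Set X} {α : ℝ}
    {d₀ : Ω → Ω → ℝ} (hd₀ : MemD α Ω d₀) (x y : Ω) :
    ∃ γ : ℝ → Ω, LipCurve d₀ γ ∧ γ 0 = x ∧ γ 1 = y := by
  have h := hd₀.2.1 x y
  by_contra hno
  have htop : (⨅ (γ : ℝ → Ω) (_ : LipCurve d₀ γ) (_ : γ 0 = x) (_ : γ 1 = y),
      pathLength d₀ γ) = ⊤ := by
    rw [iInf_eq_top]; intro γ
    by_cases h1 : LipCurve d₀ γ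
    · by_cases h2 : γ 0 = x
      · by_cases h3 : γ 1 = y
        · exact absurd ⟨γ, h1, h2, h3⟩ hno
        · simp [h3]
      · simp [h2]
    · simp [h1]
  rw [htop] at h
  exact ENNReal.ofReal_ne_top h

lemma conn_of_memD {X : Type*} [MetricSpace X] {Ω : Set X} {α : ℝ} (hα0 : 0 < α)
    {d₀ : Ω → Ω → ℝ} (hd₀ : MemD α Ω d₀) : IsPreconnected Ω := by
  apply isPreconnected_of_forall_pair
  intro x hx y hy
  obtain ⟨γ, hγlip, hγ0, hγ1⟩ := exists_curve hd₀ ⟨x, hx⟩ ⟨y, hy⟩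
  obtain ⟨L, hL⟩ := hγlip
  refine ⟨(fun t => (γ t : X)) '' Icc 0 1, ?_, ?_, ?_, ?_⟩
  · rintro _ ⟨t, _, rfl⟩; exact (γ t).2
  · exact ⟨0, by norm_num, by show (γ 0 : X) = x; rw [hγ0]⟩
  · exact ⟨1, by norm_num, by show (γ 1 : X) = y; rw [hγ1]⟩
  · apply isPreconnected_Icc.image
    have hlip : LipschitzOnWith (Real.toNNReal (α * L)) (fun t => (γ t : X)) (Icc 0 1) := by
      rw [lipschitzOnWith_iff_dist_le_mul]
      intro t ht t' ht'
      have h1 : α⁻¹ * dist (γ t : X) (γ t' : X) ≤ d₀ (γ t) (γ t') := (hd₀.2.2 _ _).1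
      have h2 : d₀ (γ t) (γ t') ≤ L * |t - t'| := hL t ht t' ht'
      have h3 : dist (γ t : X) (γ t' : X) ≤ α * (L * |t - t'|) := by
        have h4 := mul_le_mul_of_nonneg_left (h1.trans h2) hα0.le
        have h5 : α * α⁻¹ = 1 := mul_inv_cancel₀ hα0.ne'
        nlinarith [dist_nonneg (x := (γ t : X)) (y := (γ t' : X))]
      rw [Real.dist_eq]
      calc dist (γ t : X) (γ t' : X) ≤ α * L * |t - t'| := by linarith [h3]
        _ ≤ Real.toNNReal (α * L) * |t - t'| :=
          mul_le_mul_of_nonneg_right (Real.le_coe_toNNReal _) (abs_nonneg _)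
    exact hlip.continuousOn

lemma exists_exhaustion {X : Type*} [MetricSpace X] [LocallyCompactSpace X]
    (Ω : Set X) (hΩ : IsOpen Ω) (hconn : IsPreconnected Ω) (z₀ : X) (hz₀ : z₀ ∈ Ω) :
    ∃ K : ℕ → Set X, (∀ n, IsCompact (K n)) ∧ (∀ n, K n ⊆ Ω) ∧ (∀ n, K n ⊆ K (n+1)) ∧
      (∀ n, z₀ ∈ K n) ∧ ∀ C : Set X, IsCompact C → C ⊆ Ω → ∃ n, C ⊆ K n := by
  classical
  set good : X → ℝ → Prop := fun y r =>
    0 < r ∧ r ≤ 1 ∧ IsCompact (closedBall y r) ∧ closedBall y r ⊆ Ω with hgood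
  have gmono : ∀ y r r', good y r' → 0 < r → r ≤ r' → good y r := by
    intro y r r' h hr hle
    exact ⟨hr, hle.trans h.2.1, h.2.2.1.of_isClosed_subset isClosed_closedBall
      (closedBall_subset_closedBall hle), (closedBall_subset_closedBall hle).trans h.2.2.2⟩
  set s : X → ℝ := fun y => sSup {r | good y r} with hs
  have hne : ∀ y ∈ Ω, ∃ r, good y r := by
    intro y hy
    obtain ⟨r₁, hr₁, hc⟩ := exists_isCompact_closedBall y
    obtain ⟨ε, hε, hb⟩ := Metric.isOpen_iff.mp hΩ y hy
    refine ⟨min 1 (min r₁ (ε/2)), by positivity, min_le_left _ _, ?_, ?_⟩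
    · exact hc.of_isClosed_subset isClosed_closedBall
        (closedBall_subset_closedBall (le_trans (min_le_right _ _) (min_le_left _ _)))
    · refine subset_trans (closedBall_subset_ball ?_) hb
      calc min 1 (min r₁ (ε/2)) ≤ ε/2 := le_trans (min_le_right _ _) (min_le_right _ _)
        _ < ε := by linarith
  have hbdd : ∀ y, BddAbove {r | good y r} := by
    intro y; exact ⟨1, fun r hr => hr.2.1⟩
  have hspos : ∀ y ∈ Ω, 0 < s y := by
    intro y hy
    obtain ⟨r, hr⟩ := hne y hy
    exact lt_of_lt_of_le hr.1 (le_csSup (hbdd y) hr)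
  have hnem : ∀ y ∈ Ω, ({r | good y r}).Nonempty := by
    intro y hy
    exact ⟨(hne y hy).choose, (hne y hy).choose_spec⟩
  have hgoodlt : ∀ y ∈ Ω, ∀ r, 0 < r → r < s y → good y r := by
    intro y hy r hr hrs
    obtain ⟨r', hr', hlt⟩ := exists_lt_of_lt_csSup (hnem y hy) hrs
    exact gmono y r r' hr' hr hlt.le
  have hslip : ∀ y ∈ Ω, ∀ y' ∈ Ω, s y ≤ s y' + dist y y' := by
    intro y hy y' hy'
    apply csSup_le (hnem y hy)
    intro r hr
    rcases le_or_gt r (dist y y') with h | h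
    · have := hspos y' hy'; linarith
    · have hg : good y' (r - dist y y') := by
        refine ⟨by linarith, by linarith [hr.2.1, dist_nonneg (x := y) (y := y')], ?_, ?_⟩
        · exact hr.2.2.1.of_isClosed_subset isClosed_closedBall
            (closedBall_subset_closedBall' (by rw [dist_comm]; linarith))
        · exact (closedBall_subset_closedBall' (by rw [dist_comm]; linarith)).trans hr.2.2.2
      have := le_csSup (hbdd y') hg
      linarith
  -- step lemma
  have step : ∀ C : Set X, IsCompact C → C ⊆ Ω → ∃ C', IsCompact C' ∧ C' ⊆ Ω ∧
      ∀ y ∈ C, closedBall y (s y / 2) ⊆ C' := by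
    intro C hC hCΩ
    have hcover : C ⊆ ⋃ y ∈ C, ball y (s y / 8) := by
      intro y hy
      exact mem_biUnion hy (mem_ball_self (by linarith [hspos y (hCΩ hy)]))
    obtain ⟨t, htC, htfin, htcov⟩ := hC.elim_finite_subcover_image
      (fun y _ => isOpen_ball) hcover
    refine ⟨⋃ i ∈ t, closedBall i (7/8 * s i), ?_, ?_, ?_⟩
    · exact htfin.isCompact_biUnion fun i hi =>
        (hgoodlt i (hCΩ (htC hi)) _ (by linarith [hspos i (hCΩ (htC hi))])
          (by linarith [hspos i (hCΩ (htC hi))])).2.2.1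
    · intro x hx
      obtain ⟨i, hi, hxi⟩ := mem_iUnion₂.mp hx
      exact (hgoodlt i (hCΩ (htC hi)) _ (by linarith [hspos i (hCΩ (htC hi))])
          (by linarith [hspos i (hCΩ (htC hi))])).2.2.2 hxi
    · intro y hy x hx
      obtain ⟨i, hi, hyi⟩ := mem_iUnion₂.mp (htcov hy)
      have hyΩ := hCΩ hy
      have hiΩ := hCΩ (htC hi)
      have hsy : s y ≤ s i + s i / 8 := le_trans (hslip y hyΩ i hiΩ)
        (by linarith [mem_ball.mp hyi])
      have hd : dist x i ≤ 7/8 * s i := by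
        have h1 : dist x y ≤ s y / 2 := mem_closedBall.mp hx
        have h2 : dist y i < s i / 8 := mem_ball.mp hyi
        calc dist x i ≤ dist x y + dist y i := dist_triangle _ _ _
          _ ≤ 7/8 * s i := by linarith [hspos i hiΩ]
      exact mem_biUnion hi (mem_closedBall.mpr hd)
  set P : Set X → Set X := fun C =>
    if h : IsCompact C ∧ C ⊆ Ω then (step C h.1 h.2).choose else ∅ with hP
  set K : ℕ → Set X := fun n => Nat.rec ({z₀} : Set X) (fun _ C => P C) n with hK
  have hK0 : K 0 = {z₀} := rfl
  have hKsucc : ∀ n, K (n+1) = P (K n) := fun n => rfl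
  have hKbase : ∀ n, IsCompact (K n) ∧ K n ⊆ Ω := by
    intro n
    induction n with
    | zero => exact ⟨isCompact_singleton, by simpa [hK0] using hz₀⟩
    | succ n ih =>
      rw [hKsucc, hP]
      simp only [dif_pos ih]
      exact ⟨(step (K n) ih.1 ih.2).choose_spec.1, (step (K n) ih.1 ih.2).choose_spec.2.1⟩
  have hKabs : ∀ n, ∀ y ∈ K n, closedBall y (s y / 2) ⊆ K (n+1) := by
    intro n y hy
    rw [hKsucc, hP]
    simp only [dif_pos (hKbase n)]
    exact (step (K n) (hKbase n).1 (hKbase n).2).choose_spec.2.2 y hy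
  have hKmono : ∀ n, K n ⊆ K (n+1) := by
    intro n y hy
    exact hKabs n y hy (mem_closedBall_self (by linarith [hspos y ((hKbase n).2 hy)]))
  have hKz : ∀ n, z₀ ∈ K n := by
    intro n; induction n with
    | zero => exact rfl
    | succ n ih => exact hKmono n ih
  set U : Set X := ⋃ n, K n with hU
  have hUopen : IsOpen U := by
    rw [Metric.isOpen_iff]
    intro x hx
    obtain ⟨n, hn⟩ := mem_iUnion.mp hx
    refine ⟨s x / 2, by linarith [hspos x ((hKbase n).2 hn)], ?_⟩
    exact subset_trans ball_subset_closedBall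
      (subset_trans (hKabs n x hn) (subset_iUnion K (n+1)))
  have hUcl : ∀ x ∈ Ω, x ∈ closure U → x ∈ U := by
    intro x hxΩ hxc
    obtain ⟨y, hyU, hyd⟩ := Metric.mem_closure_iff.mp hxc (s x / 4)
      (by linarith [hspos x hxΩ])
    obtain ⟨n, hn⟩ := mem_iUnion.mp hyU
    have hyΩ := (hKbase n).2 hn
    have h2 : s x ≤ s y + dist x y := hslip x hxΩ y hyΩ
    have : dist x y ≤ s y / 2 := by linarith [hspos x hxΩ]
    exact mem_iUnion.mpr ⟨n+1, hKabs n y hn (mem_closedBall.mpr (by rwa [dist_comm] at this ⊢))⟩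
  have hΩU : Ω ⊆ U := by
    by_contra hno
    obtain ⟨x, hxΩ, hxU⟩ := not_subset.mp hno
    have h1 : (Ω ∩ ((closure U)ᶜ)).Nonempty :=
      ⟨x, hxΩ, fun hc => hxU (hUcl x hxΩ hc)⟩
    have h2 : (Ω ∩ U).Nonempty := ⟨z₀, hz₀, mem_iUnion.mpr ⟨0, hKz 0⟩⟩
    have hcov : Ω ⊆ U ∪ (closure U)ᶜ := by
      intro a ha
      by_cases h : a ∈ U
      · exact Or.inl h
      · exact Or.inr fun hc => h (hUcl a ha hc)
    obtain ⟨p, _, hpU, hpc⟩ := hconn U ((closure U)ᶜ) hUopen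
      (isClosed_closure.isOpen_compl) hcov h2 h1
    exact hpc (subset_closure hpU)
  refine ⟨K, fun n => (hKbase n).1, fun n => (hKbase n).2, hKmono, hKz, ?_⟩
  intro C hC hCΩ
  have hcov : C ⊆ ⋃ n, interior (K n) := by
    intro x hx
    obtain ⟨n, hn⟩ := mem_iUnion.mp (hΩU (hCΩ hx))
    refine mem_iUnion.mpr ⟨n+1, ?_⟩
    exact mem_interior.mpr ⟨ball x (s x / 2),
      subset_trans ball_subset_closedBall (hKabs n x hn), isOpen_ball,
      mem_ball_self (by linarith [hspos x ((hKbase n).2 hn)])⟩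
  obtain ⟨t, ht⟩ := hC.elim_finite_subcover (fun n => interior (K n))
    (fun n => isOpen_interior) hcov
  have hKmono' : Monotone K := monotone_nat_of_le_succ hKmono
  refine ⟨t.sup id, fun x hx => ?_⟩
  obtain ⟨n, hn, hxn⟩ := mem_iUnion₂.mp (ht hx)
  exact hKmono' (Finset.le_sup (f := id) hn) (interior_subset hxn)

/-- uniform convergence of the distances on compact sets implies
Γ-convergence of the functionals `F_{dn}` to `F_d` on Lipschitz functions with the
topology of uniform convergence on compact sets. -/
theorem stmt9 {X : Type*} [MetricSpace X] [LocallyCompactSpace X] [CompleteSpace X]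
    (Ω : Set X) (hΩ : IsOpen Ω) (α : ℝ) (hα : 1 < α)
    (hne : ∃ d₀ : Ω → Ω → ℝ, MemD α Ω d₀)
    (dn : ℕ → Ω → Ω → ℝ) (hdn : ∀ n, MemD α Ω (dn n))
    (d : Ω → Ω → ℝ) (hd : MemD α Ω d)
    (hconv : TendstoUnifCompactly dn d) :
    (∀ (un : ℕ → Ω → ℝ) (u : Ω → ℝ), (∀ n, IsLipFun (un n)) → IsLipFun u →
      UnifConvCompactsFun un u →
      Ffun d u ≤ liminf (fun n => Ffun (dn n) (un n)) atTop) ∧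
    ∀ u : Ω → ℝ, IsLipFun u →
      ∃ un : ℕ → Ω → ℝ, (∀ n, IsLipFun (un n)) ∧ UnifConvCompactsFun un u ∧
        limsup (fun n => Ffun (dn n) (un n)) atTop ≤ Ffun d u := by
  classical
  have hα0 : (0:ℝ) < α := lt_trans one_pos hα
  constructor
  · -- liminf inequality
    intro un u hlipn hlipu hconvu
    by_cases h1 : ∀ x y : Ω, |u x - u y| ≤ d x y
    · rw [Ffun_eq_zero h1]; exact zero_le
    · push_neg at h1
      obtain ⟨x, y, hxy⟩ := h1
      set ε : ℝ := (|u x - u y| - d x y) / 3 with hεdef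
      have hε0 : 0 < ε := by simp only [hεdef]; linarith
      obtain ⟨N₁, hN₁⟩ := hconv {(x, y)} isCompact_singleton ε hε0
      obtain ⟨N₂, hN₂⟩ := hconvu {x, y} (Set.toFinite _).isCompact ε hε0
      have hev : ∀ n ≥ max N₁ N₂, Ffun (dn n) (un n) = ⊤ := by
        intro n hn
        apply Ffun_eq_top
        intro hLip
        have h2 := hLip x y
        have h3 := hN₁ n (le_trans (le_max_left _ _) hn) (x, y) rfl
        have h4 := hN₂ n (le_trans (le_max_right _ _) hn) x (by simp)
        have h5 := hN₂ n (le_trans (le_max_right _ _) hn) y (by simp)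
        simp only at h3
        have t1 : |u x - u y| ≤ |u x - un n x| + |un n x - u y| := abs_sub_le _ _ _
        have t2 : |un n x - u y| ≤ |un n x - un n y| + |un n y - u y| := abs_sub_le _ _ _
        rw [abs_sub_comm (u x) (un n x)] at t1
        have h3' := abs_lt.mp h3
        have h4' := abs_lt.mp h4
        have h5' := abs_lt.mp h5
        have : |u x - u y| < d x y + 3 * ε := by linarith
        simp only [hεdef] at this
        linarith
      have hev' : ∀ᶠ n in atTop, Ffun d u ≤ Ffun (dn n) (un n) :=
        eventually_atTop.mpr ⟨max N₁ N₂, fun n hn => by rw [hev n hn]; exact le_top⟩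
      calc Ffun d u = liminf (fun _ : ℕ => Ffun d u) atTop := (liminf_const _).symm
        _ ≤ liminf (fun n => Ffun (dn n) (un n)) atTop := liminf_le_liminf hev'
  · -- limsup inequality (recovery sequence)
    intro u hu
    by_cases h1 : ∀ x y : Ω, |u x - u y| ≤ d x y
    · rcases isEmpty_or_nonempty Ω with hemp | hnem
      · refine ⟨fun _ => u, fun _ => hu, ?_, ?_⟩
        · intro K hK ε hε
          exact ⟨0, fun n _ x hx => by simpa using hε⟩
        · have hz : ∀ n, Ffun (dn n) u = 0 :=
            fun n => Ffun_eq_zero (fun x => hemp.elim x)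
          rw [funext hz, limsup_const, Ffun_eq_zero h1]
      · -- main construction
        obtain ⟨z⟩ := hnem
        have hz₀ : (z : X) ∈ Ω := z.2
        have hpre : IsPreconnected Ω := conn_of_memD hα0 hd
        obtain ⟨KK, hKc, hKΩ, hKm1, hKz, hKsw⟩ := exists_exhaustion Ω hΩ hpre z hz₀
        have hKmono : Monotone KK := monotone_nat_of_le_succ hKm1
        set Q : ℕ → Set Ω := fun m => Subtype.val ⁻¹' KK m with hQdef
        have hQc : ∀ m, IsCompact (Q m) := by
          intro m
          rw [Subtype.isCompact_iff, Subtype.image_preimage_coe,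
            inter_eq_self_of_subset_right (hKΩ m)]
          exact hKc m
        have hQmono : ∀ {a b : ℕ}, a ≤ b → Q a ⊆ Q b :=
          fun h => Set.preimage_mono (hKmono h)
        have hQz : ∀ m, z ∈ Q m := fun m => hKz m
        have hNf : ∀ m : ℕ, ∃ N, ∀ n ≥ N, ∀ p ∈ (Q m) ×ˢ (Q m),
            |dn n p.1 p.2 - d p.1 p.2| < 1 / ((m : ℝ) + 1) :=
          fun m => hconv _ ((hQc m).prod (hQc m)) _ (by positivity)
        choose Nf hNfspec using hNf
        set N' : ℕ → ℕ := fun m => (Finset.range (m+1)).sup Nf with hN'def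
        have hNfle : ∀ m, Nf m ≤ N' m :=
          fun m => Finset.le_sup (by simp)
        set φ : ℕ → ℕ := fun n =>
          Nat.rec 0 (fun k ih => if N' (ih + 1) ≤ k + 1 then ih + 1 else ih) n with hφdef
        have hφsucc : ∀ n, φ (n+1) = if N' (φ n + 1) ≤ n + 1 then φ n + 1 else φ n :=
          fun n => rfl
        have hφmono1 : ∀ n, φ n ≤ φ (n+1) := by
          intro n; rw [hφsucc]; split <;> omega
        have hφinv : ∀ n, φ n = 0 ∨ N' (φ n) ≤ n := by
          intro n
          induction n with
          | zero => exact Or.inl rfl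
          | succ n ih =>
            rw [hφsucc]
            split
            · right; omega
            · rcases ih with h | h
              · exact Or.inl h
              · exact Or.inr (h.trans (Nat.le_succ n))
        have hφtend : ∀ m, ∃ n₀, ∀ n ≥ n₀, m ≤ φ n := by
          intro m
          induction m with
          | zero => exact ⟨0, fun n _ => Nat.zero_le _⟩
          | succ m ih =>
            obtain ⟨n₀, h₀⟩ := ih
            refine ⟨max n₀ (N' (m+1)) + 1, fun n hn => ?_⟩
            obtain ⟨k, rfl⟩ : ∃ k, n = k + 1 := ⟨n - 1, by omega⟩
            have hk1 : n₀ ≤ k := by omega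
            have hk2 : N' (m+1) ≤ k + 1 := by omega
            have hm : m ≤ φ k := h₀ k hk1
            rw [hφsucc k]
            split
            · omega
            · rcases eq_or_lt_of_le hm with he | hl
              · rename_i hc
                exact absurd (by rw [← he]; exact hk2) hc
              · omega
        set Qf : ℕ → Set Ω := fun n => Q (φ n) with hQfdef
        haveI hQne : ∀ n, Nonempty (Qf n) := fun n => ⟨⟨z, hQz _⟩⟩
        set un : ℕ → Ω → ℝ := fun n x => ⨅ y : Qf n, (u y + dn n x y) with hundef
        have hdn0 : ∀ n (x y : Ω), 0 ≤ dn n x y := by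
          intro n x y
          refine le_trans ?_ ((hdn n).2.2 x y).1
          positivity
        have hdnle : ∀ n (x y : Ω), dn n x y ≤ α * dist x y := by
          intro n x y
          rw [Subtype.dist_eq]
          exact ((hdn n).2.2 x y).2
        have hbdd : ∀ n (x : Ω),
            BddBelow (Set.range fun y : Qf n => u y + dn n x y) := by
          intro n x
          obtain ⟨r, hr⟩ := (hKc (φ n)).isBounded.subset_closedBall (x : X)
          refine ⟨u x - α * r, ?_⟩
          rintro _ ⟨y, rfl⟩
          have h2 : dist (x : X) ((y : Ω) : X) ≤ r := by
            have := hr y.2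
            rw [Metric.mem_closedBall] at this
            rwa [dist_comm]
          have h3 : u x - u y ≤ d x (y : Ω) :=
            le_trans (le_abs_self _) (h1 x y)
          have h4 : d x (y : Ω) ≤ α * dist (x : X) ((y : Ω) : X) := (hd.2.2 _ _).2
          have h5 : α * dist (x : X) ((y : Ω) : X) ≤ α * r :=
            mul_le_mul_of_nonneg_left h2 hα0.le
          have h6 : 0 ≤ dn n x y := hdn0 n x y
          have h7 : (fun y : Qf n => u ↑y + dn n x ↑y) y = u ↑y + dn n x ↑y := rfl
          rw [h7]
          linarith
        have hunlip : ∀ n (x y : Ω), |un n x - un n y| ≤ dn n x y := by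
          intro n x y
          have key : ∀ a b : Ω, un n a - un n b ≤ dn n a b := by
            intro a b
            have : un n a - dn n a b ≤ un n b := by
              apply le_ciInf
              intro w
              have h5 : un n a ≤ u w + dn n a w := ciInf_le (hbdd n a) w
              have h6 : dn n a (w : Ω) ≤ dn n a b + dn n b w := (hdn n).1.2.1 a b w
              linarith
            linarith
          have h7 := key x y
          have h8 := key y x
          rw [(hdn n).1.1 y x] at h8
          rw [abs_sub_le_iff]
          exact ⟨h7, h8⟩
        refine ⟨un, ?_, ?_, ?_⟩
        · intro n
          refine ⟨Real.toNNReal α, LipschitzWith.of_dist_le_mul fun x y => ?_⟩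
          rw [Real.dist_eq, Real.coe_toNNReal α hα0.le]
          exact le_trans (hunlip n x y) (hdnle n x y)
        · intro K hK ε hε
          obtain ⟨m₁, hm₁⟩ := hKsw (Subtype.val '' K) (hK.image continuous_subtype_val)
            (by rintro _ ⟨x, _, rfl⟩; exact x.2)
          obtain ⟨m₂, hm₂⟩ := exists_nat_one_div_lt hε
          set m₀ : ℕ := max m₁ m₂ + 1 with hm₀def
          obtain ⟨n₀, hn₀⟩ := hφtend m₀
          refine ⟨n₀, fun n hn x hx => ?_⟩
          have hφn : m₀ ≤ φ n := hn₀ n hn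
          have hxQ : x ∈ Qf n := by
            have hx1 : (x : X) ∈ KK m₁ := hm₁ (Set.mem_image_of_mem _ hx)
            exact hQmono (le_trans (le_trans (le_max_left _ _) (Nat.le_succ _)) hφn) hx1
          have hNn : Nf (φ n) ≤ n := by
            rcases hφinv n with h0 | hle
            · omega
            · exact le_trans (hNfle (φ n)) hle
          have hest : ∀ y : Qf n, |dn n x y - d x y| < 1 / ((φ n : ℝ) + 1) :=
            fun y => hNfspec (φ n) n hNn (x, y) (Set.mem_prod.mpr ⟨hxQ, y.2⟩)
          have hupper : un n x ≤ u x := by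
            have h9 := ciInf_le (hbdd n x) (⟨x, hxQ⟩ : Qf n)
            have hxx : dn n x x = 0 := ((hdn n).1.2.2 x x).mpr rfl
            simpa [hxx] using h9
          have hlower : u x - 1 / ((φ n : ℝ) + 1) ≤ un n x := by
            apply le_ciInf
            intro y
            have h3 : u x - u y ≤ d x (y : Ω) := le_trans (le_abs_self _) (h1 x y)
            have h4 := abs_lt.mp (hest y)
            linarith [h4.1]
          have hmono2 : 1 / ((φ n : ℝ) + 1) ≤ 1 / ((m₂ : ℝ) + 1) := by
            apply one_div_le_one_div_of_le (by positivity)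
            have hc : m₂ ≤ φ n := by omega
            have hc' : (m₂ : ℝ) ≤ (φ n : ℝ) := by exact_mod_cast hc
            linarith
          rw [abs_lt]
          constructor <;> linarith
        · have hz : ∀ n, Ffun (dn n) (un n) = 0 := fun n => Ffun_eq_zero (hunlip n)
          rw [funext hz, limsup_const, Ffun_eq_zero h1]
    · refine ⟨fun _ => u, fun _ => hu, ?_, ?_⟩
      · intro K hK ε hε
        exact ⟨0, fun n _ x hx => by simpa using hε⟩
      · rw [Ffun_eq_top h1]
        exact le_top
end
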